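/- arXiv:1102.1110 — 8 statements merged into one kernel-verified Lean document; each statement's English description precedes it below -/
import Mathlib

section
/- Let u, v : ℝⁿ → ℝ be C² functions with u a classical subsolution of max{λ − Δu − f, |Du| − 1} = 0 and v a classical supersolution of max{μ − Δv − f, |Dv| − 1} = 0 on ℝⁿ, where f : ℝⁿ → ℝ is nonnegative. If limsup_{|x|→∞} u(x)/|x| ≤ 1 ≤ liminf_{|x|→∞} v(x)/|x|, then λ ≤ μ. -/
open Filter
open scoped InnerProductSpace Topology

/-- The Laplacian as the trace of the Hessian. -/
noncomputable def lap {n : ℕ} (u : EuclideanSpace ℝ (Fin n) → ℝ)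
    (x : EuclideanSpace ℝ (Fin n)) : ℝ :=
  ∑ i, fderiv ℝ (fun y => fderiv ℝ u y (EuclideanSpace.single i (1:ℝ))) x
    (EuclideanSpace.single i (1:ℝ))

lemma aux_second_deriv_nonpos {g : ℝ → ℝ} (hg : ContDiff ℝ 2 g) (hmax : IsLocalMax g 0) :
    deriv (deriv g) 0 ≤ 0 := by
  by_contra hpos
  push_neg at hpos
  have hg1 : ContDiff ℝ 1 (deriv g) := by
    have : ((1 : ℕ∞) + 1 : WithTop ℕ∞) = 2 := by norm_num
    rw [← this, contDiff_succ_iff_deriv] at hg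
    exact hg.2.2
  have hd0 : deriv g 0 = 0 := hmax.deriv_eq_zero
  have hdd : HasDerivAt (deriv g) (deriv (deriv g) 0) 0 :=
    ((hg1.differentiable one_ne_zero) 0).hasDerivAt
  have hslope : Tendsto (slope (deriv g) 0) (𝓝[≠] 0) (𝓝 (deriv (deriv g) 0)) :=
    hasDerivAt_iff_tendsto_slope.1 hdd
  have hev : ∀ᶠ x in 𝓝[>] (0:ℝ), 0 < deriv g x := by
    have h1 : ∀ᶠ x in 𝓝[≠] (0:ℝ), 0 < slope (deriv g) 0 x :=
      hslope.eventually (eventually_gt_nhds hpos)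
    have h2 : ∀ᶠ x in 𝓝[>] (0:ℝ), 0 < slope (deriv g) 0 x :=
      h1.filter_mono (nhdsWithin_mono _ (fun x hx => ne_of_gt hx))
    rw [eventually_nhdsWithin_iff] at h2 ⊢
    filter_upwards [h2] with x hx hx'
    have := hx hx'
    rw [slope_def_field, hd0, sub_zero, sub_zero, div_pos_iff] at this
    rcases this with ⟨h, _⟩ | ⟨_, h⟩
    · exact h
    · exact absurd hx' (not_lt.2 h.le)
  have hevm : ∀ᶠ x in 𝓝[>] (0:ℝ), g x ≤ g 0 :=
    (hmax.filter_mono nhdsWithin_le_nhds)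
  obtain ⟨δ, hδ0, hδ⟩ := (nhdsGT_basis (0:ℝ)).eventually_iff.1 (hev.and hevm)
  have hb : (δ/2) ∈ Set.Ioo (0:ℝ) δ := ⟨by linarith, by linarith⟩
  have hmono : StrictMonoOn g (Set.Icc 0 (δ/2)) := by
    apply strictMonoOn_of_deriv_pos (convex_Icc _ _) hg.continuous.continuousOn
    intro x hx
    rw [interior_Icc] at hx
    exact (hδ ⟨hx.1, hx.2.trans hb.2⟩).1
  have := hmono ⟨le_rfl, by linarith⟩ ⟨by linarith, le_rfl⟩ (by linarith)
  exact absurd this (not_lt.2 (hδ hb).2)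

lemma aux_dir {n : ℕ} {w : EuclideanSpace ℝ (Fin n) → ℝ} (hw : ContDiff ℝ 2 w)
    (x₀ e : EuclideanSpace ℝ (Fin n)) (hmax : ∀ y, w y ≤ w x₀) :
    fderiv ℝ (fun y => fderiv ℝ w y e) x₀ e ≤ 0 := by
  set L : ℝ → EuclideanSpace ℝ (Fin n) := fun t => x₀ + t • e with hLdef
  have hL0 : L 0 = x₀ := by simp [hLdef]
  have hL : ∀ t, HasDerivAt L e t := by
    intro t
    have : HasDerivAt (fun s : ℝ => s • e) ((1:ℝ) • e) t := (hasDerivAt_id t).smul_const e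
    simpa [hLdef] using this.const_add x₀
  have hLc : ContDiff ℝ 2 L := contDiff_const.add (contDiff_id.smul contDiff_const)
  have hg : ContDiff ℝ 2 (w ∘ L) := hw.comp hLc
  have hwd : Differentiable ℝ w := hw.differentiable (by norm_num)
  have hderiv : deriv (w ∘ L) = fun t => fderiv ℝ w (L t) e := by
    funext t
    exact ((hwd (L t)).hasFDerivAt.comp_hasDerivAt t (hL t)).deriv
  have hF : ContDiff ℝ 1 (fun y => fderiv ℝ w y e) :=
    (hw.fderiv_right (m := 1) (by norm_num)).clm_apply contDiff_const
  have hdd : HasDerivAt (fun t => fderiv ℝ w (L t) e)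
      (fderiv ℝ (fun y => fderiv ℝ w y e) x₀ e) 0 := by
    have := ((hF.differentiable one_ne_zero) (L 0)).hasFDerivAt.comp_hasDerivAt 0 (hL 0)
    rwa [hL0] at this
  have h2 : deriv (deriv (w ∘ L)) 0 = fderiv ℝ (fun y => fderiv ℝ w y e) x₀ e := by
    rw [hderiv]; exact hdd.deriv
  rw [← h2]
  apply aux_second_deriv_nonpos hg
  apply Filter.Eventually.of_forall
  intro t
  simpa [hL0] using hmax (L t)

lemma aux_grad_norm {n : ℕ} (φ : EuclideanSpace ℝ (Fin n) → ℝ) (x : EuclideanSpace ℝ (Fin n)) :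
    ‖gradient φ x‖ = ‖fderiv ℝ φ x‖ := by
  show ‖(InnerProductSpace.toDual ℝ _).symm (fderiv ℝ φ x)‖ = _
  exact LinearIsometryEquiv.norm_map _ _

theorem stmt0 {n : ℕ} (u v f : EuclideanSpace ℝ (Fin n) → ℝ) (lam mu : ℝ)
    (hu : ContDiff ℝ 2 u) (hv : ContDiff ℝ 2 v)
    (hf : ∀ x, 0 ≤ f x)
    (hsub : ∀ x, lam - lap u x - f x ≤ 0 ∧ ‖gradient u x‖ ≤ 1)
    (hsup : ∀ x, 0 ≤ max (mu - lap v x - f x) (‖gradient v x‖ - 1))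
    (hugrow : limsup (fun x => u x / ‖x‖) (cocompact (EuclideanSpace ℝ (Fin n))) ≤ 1)
    (hvgrow : 1 ≤ liminf (fun x => v x / ‖x‖) (cocompact (EuclideanSpace ℝ (Fin n)))) :
    lam ≤ mu := by
  have hud : Differentiable ℝ u := hu.differentiable (by norm_num)
  have hvd : Differentiable ℝ v := hv.differentiable (by norm_num)
  -- u is 1-Lipschitz
  have hulip : LipschitzWith 1 u := by
    apply lipschitzWith_of_nnnorm_fderiv_le hud
    intro x
    have h1 : ‖fderiv ℝ u x‖ ≤ 1 := by
      rw [← aux_grad_norm]; exact (hsub x).2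
    exact_mod_cast h1
  have hugb : ∀ x, u x ≤ u 0 + ‖x‖ := by
    intro x
    have := hulip.dist_le_mul x 0
    rw [Real.dist_eq, dist_eq_norm, sub_zero, NNReal.coe_one, one_mul] at this
    have := abs_le.1 this
    linarith [this.2]
  have key : ∀ ε : ℝ, 0 < ε → ε < 1 → ε * lam ≤ mu := by
    intro ε hε hε1
    set c : ℝ := (1 + ε) / 2 with hc
    have hc1 : c < 1 := by rw [hc]; linarith
    have hεc : ε < c := by rw [hc]; linarith
    set w : EuclideanSpace ℝ (Fin n) → ℝ := fun x => ε * u x - v x with hwdef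
    have hwC : ContDiff ℝ 2 w := (contDiff_const.mul hu).sub hv
    -- eventual lower bound on v
    have hev1 : ∀ᶠ x in cocompact (EuclideanSpace ℝ (Fin n)), c < v x / ‖x‖ := by
      by_cases hcb : IsBoundedUnder (· ≥ ·) (cocompact (EuclideanSpace ℝ (Fin n)))
          (fun x => v x / ‖x‖)
      · exact eventually_lt_of_lt_liminf (lt_of_lt_of_le hc1 hvgrow) hcb
      · exfalso
        have hS : {a : ℝ |
            ∀ᶠ x in cocompact (EuclideanSpace ℝ (Fin n)), a ≤ v x / ‖x‖} = ∅ := by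
          rw [Set.eq_empty_iff_forall_notMem]
          intro a ha
          exact hcb ⟨a, ha⟩
        rw [liminf_eq, hS, Real.sSup_empty] at hvgrow
        linarith
    have hev2 : ∀ᶠ x : EuclideanSpace ℝ (Fin n) in cocompact _, (1:ℝ) ≤ ‖x‖ :=
      tendsto_norm_cocompact_atTop.eventually_ge_atTop 1
    have hbound : ∀ᶠ x in cocompact (EuclideanSpace ℝ (Fin n)),
        w x ≤ ε * u 0 + (ε - c) * ‖x‖ := by
      filter_upwards [hev1, hev2] with x h1 h2
      have hx0 : (0:ℝ) < ‖x‖ := lt_of_lt_of_le one_pos h2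
      have hv' : c * ‖x‖ < v x := (lt_div_iff₀ hx0).1 h1
      have hu' : ε * u x ≤ ε * (u 0 + ‖x‖) :=
        mul_le_mul_of_nonneg_left (hugb x) hε.le
      simp only [hwdef]
      nlinarith
    have htend : Tendsto w (cocompact (EuclideanSpace ℝ (Fin n))) atBot := by
      apply tendsto_atBot_mono' _ hbound
      apply tendsto_atBot_add_const_left _ (ε * u 0)
      have h1 : Tendsto (fun x : EuclideanSpace ℝ (Fin n) => (c - ε) * ‖x‖)
          (cocompact _) atTop :=
        tendsto_norm_cocompact_atTop.const_mul_atTop (by linarith)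
      have h2 := tendsto_neg_atTop_atBot.comp h1
      exact h2.congr fun x => by simp [Function.comp]; ring
    obtain ⟨x₀, hx₀⟩ := hwC.continuous.exists_forall_ge htend
    -- first-order condition
    have hw' : ∀ y, HasFDerivAt w (ε • fderiv ℝ u y - fderiv ℝ v y) y := fun y =>
      ((hud y).hasFDerivAt.const_mul ε).sub (hvd y).hasFDerivAt
    have hlocmax : IsLocalMax w x₀ := Filter.Eventually.of_forall hx₀
    have hgrad0 : fderiv ℝ w x₀ = 0 := hlocmax.fderiv_eq_zero
    have hfv : fderiv ℝ v x₀ = ε • fderiv ℝ u x₀ := by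
      have h := (hw' x₀).fderiv
      rw [hgrad0] at h
      exact (sub_eq_zero.1 h.symm).symm
    have hnu : ‖fderiv ℝ u x₀‖ ≤ 1 := by rw [← aux_grad_norm]; exact (hsub x₀).2
    have hnv : ‖gradient v x₀‖ - 1 ≤ ε - 1 := by
      rw [aux_grad_norm, hfv, norm_smul, Real.norm_eq_abs, abs_of_pos hε]
      nlinarith
    have hmu0 : 0 ≤ mu - lap v x₀ - f x₀ := by
      rcases le_max_iff.1 (hsup x₀) with h | h
      · exact h
      · linarith
    have hterm : ∀ i : Fin n,
        ε * fderiv ℝ (fun y => fderiv ℝ u y (EuclideanSpace.single i (1:ℝ))) x₀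
            (EuclideanSpace.single i (1:ℝ))
          - fderiv ℝ (fun y => fderiv ℝ v y (EuclideanSpace.single i (1:ℝ))) x₀
            (EuclideanSpace.single i (1:ℝ)) ≤ 0 := by
      intro i
      set e := EuclideanSpace.single i (1:ℝ) with he
      have hdir := aux_dir hwC x₀ e hx₀
      have hUd : DifferentiableAt ℝ (fun y => fderiv ℝ u y e) x₀ :=
        ((hu.fderiv_right (m := 1) (by norm_num)).clm_apply contDiff_const).differentiable
          one_ne_zero x₀
      have hVd : DifferentiableAt ℝ (fun y => fderiv ℝ v y e) x₀ :=
        ((hv.fderiv_right (m := 1) (by norm_num)).clm_apply contDiff_const).differentiable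
          one_ne_zero x₀
      have heq : (fun y => fderiv ℝ w y e) = fun y => ε * fderiv ℝ u y e - fderiv ℝ v y e := by
        funext y
        rw [(hw' y).fderiv]
        simp
      rw [heq] at hdir
      have hfd : HasFDerivAt (fun y => ε * fderiv ℝ u y e - fderiv ℝ v y e)
          (ε • fderiv ℝ (fun y => fderiv ℝ u y e) x₀
            - fderiv ℝ (fun y => fderiv ℝ v y e) x₀) x₀ :=
        (hUd.hasFDerivAt.const_mul ε).sub hVd.hasFDerivAt
      rw [hfd.fderiv] at hdir
      simpa using hdir
    have hsum : ε * lap u x₀ - lap v x₀ ≤ 0 := by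
      unfold lap
      rw [Finset.mul_sum, ← Finset.sum_sub_distrib]
      exact Finset.sum_nonpos fun i _ => hterm i
    nlinarith [mul_le_mul_of_nonneg_left (hsub x₀).1 hε.le,
      mul_nonneg (by linarith : (0:ℝ) ≤ 1 - ε) (hf x₀), hsum, hmu0]
  -- pass to the limit ε → 1⁻
  have hlim : Tendsto (fun ε : ℝ => ε * lam) (𝓝[<] (1:ℝ)) (𝓝 lam) := by
    have : Tendsto (fun ε : ℝ => ε * lam) (𝓝 (1:ℝ)) (𝓝 (1 * lam)) :=
      (continuous_id.mul continuous_const).tendsto 1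
    rw [one_mul] at this
    exact this.mono_left nhdsWithin_le_nhds
  apply le_of_tendsto hlim
  filter_upwards [Ioo_mem_nhdsLT_of_mem (by norm_num : (1:ℝ) ∈ Set.Ioc (0:ℝ) 1)] with ε hε
  exact key ε hε.1 hε.2
end

section
/- Let f : ℝⁿ → ℝ be continuous with f(x) ≥ (|x| − K)⁺ for all x, for some constant K > 0. Then the function u(x) = (|x| − K)⁺ is convex, Lipschitz with constant 1, satisfies lim_{|x|→∞} u(x)/|x| = 1, and for every x₀ and every (p, X) in the second-order superjet of u at x₀ one has max{δ u(x₀) − tr X − f(x₀), |p| − 1} ≤ 0 for every 0 < δ ≤ 1. -/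
open Filter
open scoped InnerProductSpace Topology

/-- `(p, X)` belongs to the second-order superjet of `u` at `x₀`. -/
def InSuperjet {n : ℕ} (u : EuclideanSpace ℝ (Fin n) → ℝ)
    (x₀ p : EuclideanSpace ℝ (Fin n)) (X : Matrix (Fin n) (Fin n) ℝ) : Prop :=
  ∀ c > (0:ℝ), ∀ᶠ x in nhds x₀,
    u x ≤ u x₀ + ⟪p, x - x₀⟫_ℝ +
      (1 / 2) * ∑ i, ∑ j, X i j * (x - x₀) i * (x - x₀) j + c * ‖x - x₀‖ ^ 2

lemma quad_smul {n : ℕ} (X : Matrix (Fin n) (Fin n) ℝ) (t : ℝ) (v : EuclideanSpace ℝ (Fin n)) :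
    ∑ j, ∑ k, X j k * (t • v) j * (t • v) k = t^2 * ∑ j, ∑ k, X j k * v j * v k := by
  simp only [PiLp.smul_apply, smul_eq_mul, Finset.mul_sum]
  refine Finset.sum_congr rfl fun j _ => Finset.sum_congr rfl fun k _ => by ring

lemma quad_single {n : ℕ} (X : Matrix (Fin n) (Fin n) ℝ) (i : Fin n) :
    ∑ j, ∑ k, X j k * (EuclideanSpace.single i (1:ℝ)) j * (EuclideanSpace.single i (1:ℝ)) k
      = X i i := by
  simp [EuclideanSpace.single_apply, mul_ite, ite_mul, Finset.sum_ite_eq']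

set_option maxHeartbeats 1000000 in
lemma superjet_grad_le {n : ℕ} {u : EuclideanSpace ℝ (Fin n) → ℝ}
    (hlip : LipschitzWith 1 u) {x₀ p : EuclideanSpace ℝ (Fin n)}
    {X : Matrix (Fin n) (Fin n) ℝ} (hS : InSuperjet u x₀ p X) : ‖p‖ ≤ 1 := by
  rcases eq_or_ne p 0 with hp | hp
  · simp [hp]
  refine le_of_forall_pos_le_add fun ε hε => ?_
  set v : EuclideanSpace ℝ (Fin n) := (-‖p‖⁻¹) • p with hv
  have hpnorm : ‖p‖ ≠ 0 := norm_ne_zero_iff.2 hp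
  have hvnorm : ‖v‖ = 1 := by
    rw [hv, norm_smul]
    simp [abs_of_nonneg (inv_nonneg.2 (norm_nonneg p)), inv_mul_cancel₀ hpnorm]
  have hpv : ⟪p, v⟫_ℝ = -‖p‖ := by
    rw [hv, real_inner_smul_right, real_inner_self_eq_norm_sq]
    field_simp
  set Q : ℝ := ∑ j, ∑ k, X j k * v j * v k with hQ
  set M : ℝ := |Q| / 2 + ε / 2 with hM
  have hM0 : 0 ≤ M := by positivity
  obtain ⟨ε₀, hε₀, hball⟩ := Metric.eventually_nhds_iff.1 (hS (ε/2) (half_pos hε))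
  set t : ℝ := min (ε₀ / 2) (ε / (M + 1)) with ht
  have ht0 : 0 < t := lt_min (half_pos hε₀) (by positivity)
  have htε₀ : t < ε₀ := lt_of_le_of_lt (min_le_left _ _) (by linarith)
  have htM : t * (M + 1) ≤ ε := by
    have h := min_le_right (ε₀/2) (ε / (M + 1))
    calc t * (M + 1) ≤ ε / (M + 1) * (M + 1) := by
          exact mul_le_mul_of_nonneg_right h (by positivity)
      _ = ε := by field_simp
  set x : EuclideanSpace ℝ (Fin n) := x₀ + t • v with hx
  have hdist : dist x x₀ = t := by
    rw [hx, dist_eq_norm, add_sub_cancel_left, norm_smul, hvnorm]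
    simp [abs_of_pos ht0]
  have hineq := hball (show dist x x₀ < ε₀ by rw [hdist]; exact htε₀)
  have hxsub : x - x₀ = t • v := by rw [hx, add_sub_cancel_left]
  rw [hxsub] at hineq
  have hinner : ⟪p, t • v⟫_ℝ = -(t * ‖p‖) := by
    rw [real_inner_smul_right, hpv]; ring
  have hquad : ∑ j, ∑ k, X j k * (t • v) j * (t • v) k = t^2 * Q := quad_smul X t v
  have hnorm : ‖t • v‖ = t := by rw [norm_smul, hvnorm]; simp [abs_of_pos ht0]
  rw [hinner, hquad, hnorm] at hineq
  have hlow : u x₀ - t ≤ u x := by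
    have h := hlip.dist_le_mul x₀ x
    rw [Real.dist_eq, dist_comm, hdist] at h
    have h' := abs_le.1 h
    simp only [NNReal.coe_one, one_mul] at h'
    linarith [h'.2]
  clear_value v Q M t x
  have key : t * ‖p‖ ≤ t + t^2 * (Q/2 + ε/2) := by linarith [hineq, hlow]
  have hQM : Q / 2 + ε / 2 ≤ M := by
    rw [hM]
    have := le_abs_self Q
    linarith
  have k1 : t * ‖p‖ ≤ t + t^2 * M := by
    have h3 := mul_le_mul_of_nonneg_left hQM (sq_nonneg t)
    linarith [key]
  have k2 : ‖p‖ ≤ 1 + t * M := by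
    have h2 : t * ‖p‖ ≤ t * (1 + t * M) := by linarith [k1]
    exact le_of_mul_le_mul_left h2 ht0
  have k3 : t * M ≤ ε := by linarith [htM, ht0.le]
  linarith

set_option maxHeartbeats 1000000 in
lemma superjet_diag_nonneg {n : ℕ} {u : EuclideanSpace ℝ (Fin n) → ℝ}
    (hconv : ConvexOn ℝ Set.univ u) {x₀ p : EuclideanSpace ℝ (Fin n)}
    {X : Matrix (Fin n) (Fin n) ℝ} (hS : InSuperjet u x₀ p X) (i : Fin n) : 0 ≤ X i i := by
  refine le_of_forall_pos_le_add fun ε hε => ?_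
  obtain ⟨ε₀, hε₀, hball⟩ := Metric.eventually_nhds_iff.1 (hS (ε/2) (half_pos hε))
  set e : EuclideanSpace ℝ (Fin n) := EuclideanSpace.single i (1:ℝ) with he
  have hen : ‖e‖ = 1 := by rw [he, EuclideanSpace.norm_single]; norm_num
  set t : ℝ := ε₀ / 2 with ht
  have ht0 : 0 < t := half_pos hε₀
  have hne : ∀ s : ℝ, |s| = t → dist (x₀ + s • e) x₀ < ε₀ := by
    intro s hs
    rw [dist_eq_norm, add_sub_cancel_left, norm_smul, hen, mul_one, Real.norm_eq_abs, hs]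
    linarith
  have h1 := hball (show dist (x₀ + t • e) x₀ < ε₀ from hne t (abs_of_pos ht0))
  have h2 := hball (show dist (x₀ + (-t) • e) x₀ < ε₀ from
    hne (-t) (by rw [abs_neg, abs_of_pos ht0]))
  simp only [add_sub_cancel_left] at h1 h2
  rw [quad_smul, quad_single, real_inner_smul_right] at h1 h2
  have hn1 : ‖t • e‖ = t := by rw [norm_smul, hen]; simp [abs_of_pos ht0]
  have hn2 : ‖(-t) • e‖ = t := by
    rw [norm_smul, hen, mul_one, Real.norm_eq_abs, abs_neg, abs_of_pos ht0]
  rw [hn1] at h1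
  rw [hn2] at h2
  have hmid : u x₀ ≤ (1/2 : ℝ) * u (x₀ + t • e) + (1/2 : ℝ) * u (x₀ + (-t) • e) := by
    have hcomb : (1/2 : ℝ) • (x₀ + t • e) + (1/2 : ℝ) • (x₀ + (-t) • e) = x₀ := by
      module
    have h := hconv.2 (Set.mem_univ (x₀ + t • e)) (Set.mem_univ (x₀ + (-t) • e))
      (by norm_num : (0:ℝ) ≤ 1/2) (by norm_num : (0:ℝ) ≤ 1/2) (by norm_num)
    rw [hcomb] at h
    simpa [smul_eq_mul] using h
  clear_value e t
  have hsq : (-t)^2 = t^2 := by ring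
  rw [hsq] at h2
  have hsum : 0 ≤ t^2 * (X i i + ε) := by linarith [h1, h2, hmid]
  have ht2 : 0 < t^2 := by positivity
  nlinarith [hsum, ht2]

theorem stmt3 {n : ℕ} (f : EuclideanSpace ℝ (Fin n) → ℝ) (hf : Continuous f)
    (K : ℝ) (hK : 0 < K)
    (hfK : ∀ x : EuclideanSpace ℝ (Fin n), max (‖x‖ - K) 0 ≤ f x) :
    ConvexOn ℝ Set.univ (fun x : EuclideanSpace ℝ (Fin n) => max (‖x‖ - K) 0) ∧
    LipschitzWith 1 (fun x : EuclideanSpace ℝ (Fin n) => max (‖x‖ - K) 0) ∧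
    Tendsto (fun x : EuclideanSpace ℝ (Fin n) => max (‖x‖ - K) 0 / ‖x‖)
      (cocompact (EuclideanSpace ℝ (Fin n))) (nhds 1) ∧
    ∀ δ : ℝ, 0 < δ → δ ≤ 1 →
      ∀ (x₀ p : EuclideanSpace ℝ (Fin n)) (X : Matrix (Fin n) (Fin n) ℝ),
        InSuperjet (fun x : EuclideanSpace ℝ (Fin n) => max (‖x‖ - K) 0) x₀ p X →
        max (δ * max (‖x₀‖ - K) 0 - X.trace - f x₀) (‖p‖ - 1) ≤ 0 := by
  have hconv : ConvexOn ℝ Set.univ (fun x : EuclideanSpace ℝ (Fin n) => max (‖x‖ - K) 0) := by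
    have h1 : ConvexOn ℝ (Set.univ : Set (EuclideanSpace ℝ (Fin n))) (fun x => ‖x‖ - K) := by
      convert (convexOn_norm (convex_univ (𝕜 := ℝ))).add_const (-K) using 1
      · rfl
      · rfl
      · funext x; simp [sub_eq_add_neg]
    exact h1.sup (convexOn_const 0 convex_univ)
  have hsub : LipschitzWith 1 (fun t : ℝ => t - K) :=
    LipschitzWith.of_dist_le_mul fun a b => by rw [dist_sub_right]; simp
  have hlip : LipschitzWith 1 (fun x : EuclideanSpace ℝ (Fin n) => max (‖x‖ - K) 0) := by
    have h := ((hsub.max_const 0).comp (lipschitzWith_one_norm (E := EuclideanSpace ℝ (Fin n))))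
    rw [one_mul] at h
    exact h
  refine ⟨hconv, hlip, ?_, ?_⟩
  · have h1 : Tendsto (fun t : ℝ => (t - K) / t) atTop (nhds 1) := by
      have he : (fun t : ℝ => 1 - K / t) =ᶠ[atTop] fun t => (t - K) / t := by
        filter_upwards [eventually_gt_atTop (0:ℝ)] with t ht
        field_simp
      rw [← tendsto_congr' he]
      have hK0 : Tendsto (fun t : ℝ => K / t) atTop (nhds 0) :=
        (tendsto_const_nhds : Tendsto (fun _ : ℝ => K) atTop (nhds K)).div_atTop tendsto_id
      simpa using (tendsto_const_nhds : Tendsto (fun _ : ℝ => (1:ℝ)) atTop (nhds 1)).sub hK0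
    have h2 : Tendsto (fun x : EuclideanSpace ℝ (Fin n) => (‖x‖ - K) / ‖x‖)
        (cocompact (EuclideanSpace ℝ (Fin n))) (nhds 1) :=
      h1.comp tendsto_norm_cocompact_atTop
    refine h2.congr' ?_
    filter_upwards [tendsto_norm_cocompact_atTop.eventually (eventually_ge_atTop K)] with x hx
    rw [max_eq_left (sub_nonneg.2 hx)]
  · intro δ hδ hδ1 x₀ p X hS
    have hp1 : ‖p‖ ≤ 1 := superjet_grad_le hlip hS
    have htr : 0 ≤ X.trace := by
      rw [Matrix.trace]
      exact Finset.sum_nonneg fun i _ => superjet_diag_nonneg hconv hS i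
    have hu0 : (0:ℝ) ≤ max (‖x₀‖ - K) 0 := le_max_right _ _
    have hfu : max (‖x₀‖ - K) 0 ≤ f x₀ := hfK x₀
    refine max_le ?_ (by linarith)
    nlinarith [hu0, hfu, htr]
end

section
/- Let u : ℝⁿ → ℝ be Lipschitz with constant 1 and satisfy lim_{|x|→∞} u(x)/|x| = 1. Fix 0 < ε < 1. Then the function C(x,y) = ε u((x+y)/2) − (u(x)+u(y))/2 tends to −∞ as |x| + |y| → ∞, and hence attains its global maximum on ℝⁿ × ℝⁿ if u is continuous. -/
open Filter
open scoped Topology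

theorem stmt5 {n : ℕ} (u : EuclideanSpace ℝ (Fin n) → ℝ)
    (hu : Continuous u) (hlip : LipschitzWith 1 u)
    (hgrow : Tendsto (fun x : EuclideanSpace ℝ (Fin n) => u x / ‖x‖)
      (cocompact (EuclideanSpace ℝ (Fin n))) (nhds 1))
    (ε : ℝ) (hε0 : 0 < ε) (hε1 : ε < 1) :
    Tendsto (fun q : EuclideanSpace ℝ (Fin n) × EuclideanSpace ℝ (Fin n) =>
        ε * u ((1 / 2 : ℝ) • (q.1 + q.2)) - (u q.1 + u q.2) / 2)
      (cocompact (EuclideanSpace ℝ (Fin n) × EuclideanSpace ℝ (Fin n))) atBot ∧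
    ∃ p : EuclideanSpace ℝ (Fin n) × EuclideanSpace ℝ (Fin n),
      ∀ q : EuclideanSpace ℝ (Fin n) × EuclideanSpace ℝ (Fin n),
        ε * u ((1 / 2 : ℝ) • (q.1 + q.2)) - (u q.1 + u q.2) / 2 ≤
          ε * u ((1 / 2 : ℝ) • (p.1 + p.2)) - (u p.1 + u p.2) / 2 := by
  let E := EuclideanSpace ℝ (Fin n)
  set f : EuclideanSpace ℝ (Fin n) × EuclideanSpace ℝ (Fin n) → ℝ := fun q =>
    ε * u ((1 / 2 : ℝ) • (q.1 + q.2)) - (u q.1 + u q.2) / 2 with hf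
  -- Lipschitz bound
  have hlipb : ∀ x : EuclideanSpace ℝ (Fin n), |u x - u 0| ≤ ‖x‖ := by
    intro x
    have := hlip.dist_le_mul x 0
    simpa [Real.dist_eq, dist_eq_norm] using this
  -- growth lower bound: find R with u x ≥ (1+ε)/2 * ‖x‖ for ‖x‖ ≥ R
  have h1 : ∀ᶠ x in cocompact (EuclideanSpace ℝ (Fin n)), (1 + ε) / 2 < u x / ‖x‖ :=
    hgrow.eventually (eventually_gt_nhds (by linarith))
  rw [← Metric.cobounded_eq_cocompact, ← comap_norm_atTop, eventually_comap] at h1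
  obtain ⟨R, hR⟩ := eventually_atTop.mp h1
  set R' : ℝ := max R 1 with hR'
  have hR'1 : (1 : ℝ) ≤ R' := le_max_right R 1
  set C : ℝ := 2 * R' + |u 0| with hC
  have hC0 : 0 ≤ C := by positivity
  have hlow : ∀ x : EuclideanSpace ℝ (Fin n), (1 + ε) / 2 * ‖x‖ - C ≤ u x := by
    intro x
    rcases le_or_gt R' ‖x‖ with h | h
    · have hxpos : (0 : ℝ) < ‖x‖ := lt_of_lt_of_le (by linarith) h
      have h2 := hR ‖x‖ (le_trans (le_max_left R 1) h) x rfl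
      rw [lt_div_iff₀ hxpos] at h2
      nlinarith
    · have h2 := hlipb x
      have h3 : u 0 - ‖x‖ ≤ u x := by
        have := abs_le.mp h2
        linarith [this.1]
      have h4 : 0 ≤ ‖x‖ := norm_nonneg x
      nlinarith [neg_abs_le (u 0), abs_nonneg (u 0)]
  -- upper bound on f
  have hub : ∀ q : EuclideanSpace ℝ (Fin n) × EuclideanSpace ℝ (Fin n),
      f q ≤ ε * u 0 + C - (1 - ε) / 4 * (‖q.1‖ + ‖q.2‖) := by
    intro q
    have hm : u ((1 / 2 : ℝ) • (q.1 + q.2)) ≤ u 0 + (‖q.1‖ + ‖q.2‖) / 2 := by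
      have h2 := hlipb ((1 / 2 : ℝ) • (q.1 + q.2))
      have h3 : ‖(1 / 2 : ℝ) • (q.1 + q.2)‖ ≤ (‖q.1‖ + ‖q.2‖) / 2 := by
        rw [norm_smul, Real.norm_eq_abs, abs_of_nonneg (by norm_num : (0:ℝ) ≤ 1 / 2)]
        linarith [norm_add_le q.1 q.2]
      have := (abs_le.mp h2).2
      linarith
    have hm' : ε * u ((1 / 2 : ℝ) • (q.1 + q.2)) ≤
        ε * (u 0 + (‖q.1‖ + ‖q.2‖) / 2) :=
      mul_le_mul_of_nonneg_left hm hε0.le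
    have h1 := hlow q.1
    have h2 := hlow q.2
    simp only [hf]
    nlinarith
  -- the sum of norms tends to infinity
  have hS : Tendsto (fun q : EuclideanSpace ℝ (Fin n) × EuclideanSpace ℝ (Fin n) => ‖q.1‖ + ‖q.2‖)
      (cocompact (EuclideanSpace ℝ (Fin n) × EuclideanSpace ℝ (Fin n))) atTop := by
    refine tendsto_atTop_mono (fun q => ?_) (tendsto_norm_cocompact_atTop (E := EuclideanSpace ℝ (Fin n) × EuclideanSpace ℝ (Fin n)))
    rw [Prod.norm_def]
    exact max_le (by linarith [norm_nonneg q.2]) (by linarith [norm_nonneg q.1])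
  have hg : Tendsto (fun q : EuclideanSpace ℝ (Fin n) × EuclideanSpace ℝ (Fin n) =>
      ε * u 0 + C - (1 - ε) / 4 * (‖q.1‖ + ‖q.2‖)) (cocompact (EuclideanSpace ℝ (Fin n) × EuclideanSpace ℝ (Fin n))) atBot := by
    have h2 : Tendsto (fun q : EuclideanSpace ℝ (Fin n) × EuclideanSpace ℝ (Fin n) => (1 - ε) / 4 * (‖q.1‖ + ‖q.2‖))
        (cocompact (EuclideanSpace ℝ (Fin n) × EuclideanSpace ℝ (Fin n))) atTop := hS.const_mul_atTop (by linarith)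
    have h3 := tendsto_neg_atTop_atBot.comp h2
    have h4 := tendsto_atBot_add_const_left (cocompact (EuclideanSpace ℝ (Fin n) × EuclideanSpace ℝ (Fin n))) (ε * u 0 + C) h3
    refine h4.congr (fun q => ?_)
    simp [Function.comp]; ring
  have htendsto : Tendsto f (cocompact (EuclideanSpace ℝ (Fin n) × EuclideanSpace ℝ (Fin n))) atBot := tendsto_atBot_mono hub hg
  have hcont : Continuous f := by
    apply Continuous.sub
    · exact continuous_const.mul (hu.comp (by fun_prop))
    · exact ((hu.comp continuous_fst).add (hu.comp continuous_snd)).div_const 2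
  exact ⟨htendsto, hcont.exists_forall_ge htendsto⟩
end

section
/- Let u : ℝⁿ → ℝ be a C² function satisfying max{δu − Δu − f, |Du| − 1} = 0 pointwise on ℝⁿ, with f : ℝⁿ → ℝ convex and u satisfying lim_{|x|→∞} u(x)/|x| = 1. Then u is convex. -/
set_option maxHeartbeats 1000000

open Filter
open scoped Topology

namespace Stmt6Aux

lemma second_deriv_nonpos_of_isLocalMax {φ φ' φ'' : ℝ → ℝ}
    (h1 : ∀ t, HasDerivAt φ (φ' t) t) (h2 : ∀ t, HasDerivAt φ' (φ'' t) t)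
    (hc : Continuous φ'') (hmax : IsLocalMax φ 0) : φ'' 0 ≤ 0 := by
  by_contra hpos
  push_neg at hpos
  have h0 : φ' 0 = 0 := hmax.hasDerivAt_eq_zero (h1 0)
  obtain ⟨δ, hδ, hball⟩ := Metric.isOpen_iff.1 (isOpen_Ioi.preimage hc) 0 hpos
  have hcφ' : Continuous φ' := by
    refine continuous_iff_continuousAt.2 fun t => (h2 t).continuousAt
  have hcφ : Continuous φ := by
    refine continuous_iff_continuousAt.2 fun t => (h1 t).continuousAt
  -- φ' strictly monotone on Icc 0 (δ/2)
  have hmono' : StrictMonoOn φ' (Set.Icc 0 (δ/2)) := by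
    refine strictMonoOn_of_deriv_pos (convex_Icc _ _) hcφ'.continuousOn ?_
    intro t ht
    rw [interior_Icc] at ht
    have : t ∈ Metric.ball (0:ℝ) δ := by
      rw [Real.ball_eq_Ioo]
      constructor <;> [linarith [ht.1]; linarith [ht.2, hδ]]
    have := hball this
    rw [(h2 t).deriv]
    exact this
  have hφ'pos : ∀ t ∈ Set.Ioc 0 (δ/2), 0 < φ' t := by
    intro t ht
    have := hmono' (Set.left_mem_Icc.2 (by linarith)) ⟨le_of_lt ht.1, ht.2⟩ ht.1
    rwa [h0] at this
  have hmono : StrictMonoOn φ (Set.Icc 0 (δ/2)) := by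
    refine strictMonoOn_of_deriv_pos (convex_Icc _ _) hcφ.continuousOn ?_
    intro t ht
    rw [interior_Icc] at ht
    rw [(h1 t).deriv]
    exact hφ'pos t ⟨ht.1, le_of_lt ht.2⟩
  obtain ⟨r, hr, hmem⟩ := Metric.eventually_nhds_iff_ball.1 hmax
  set t : ℝ := min (δ/4) (r/2) with ht
  have htpos : 0 < t := by positivity
  have h1t : φ 0 < φ t := by
    refine hmono (Set.left_mem_Icc.2 (by positivity)) ⟨le_of_lt htpos, ?_⟩ htpos
    calc t ≤ δ/4 := min_le_left _ _
      _ ≤ δ/2 := by linarith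
  have h2t : φ t ≤ φ 0 := by
    refine hmem t ?_
    rw [Metric.mem_ball, Real.dist_eq, sub_zero, abs_of_pos htpos]
    calc t ≤ r/2 := min_le_right _ _
      _ < r := by linarith
  linarith

section F
variable {V : Type*} [NormedAddCommGroup V] [NormedSpace ℝ V]

lemma convexOn_of_midpoint (u : V → ℝ) (hcont : Continuous u)
    (hmid : ∀ x y : V, u ((2:ℝ)⁻¹ • (x + y)) ≤ (u x + u y) / 2) :
    ConvexOn ℝ Set.univ u := by
  refine ⟨convex_univ, ?_⟩
  rintro x - y - a b ha hb hab
  set γ : ℝ → V := fun t => x + t • (y - x) with hγ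
  set g : ℝ → ℝ := fun t => u (γ t) - ((1 - t) * u x + t * u y) with hg
  have hγc : Continuous γ := continuous_const.add (continuous_id.smul continuous_const)
  have hgc : Continuous g := by
    refine (hcont.comp hγc).sub ?_
    fun_prop
  have hgmid : ∀ s t : ℝ, g ((s + t) / 2) ≤ (g s + g t) / 2 := by
    intro s t
    have hpt : γ ((s + t) / 2) = (2:ℝ)⁻¹ • (γ s + γ t) := by
      rw [hγ]
      simp only
      module
    have := hmid (γ s) (γ t)
    rw [← hpt] at this
    rw [hg]
    simp only
    have hlin : (1 - (s + t) / 2) * u x + ((s + t) / 2) * u y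
        = (((1 - s) * u x + s * u y) + ((1 - t) * u x + t * u y)) / 2 := by ring
    rw [hlin]
    linarith
  clear_value γ g
  have h0 : g 0 = 0 := by rw [hg, hγ]; simp
  have h1 : g 1 = 0 := by rw [hg, hγ]; simp
  have key : ∀ t ∈ Set.Icc (0:ℝ) 1, g t ≤ 0 := by
    obtain ⟨ts, htsI, htsmax⟩ := isCompact_Icc.exists_isMaxOn
      (⟨0, Set.mem_Icc.2 ⟨le_refl 0, zero_le_one⟩⟩ : (Set.Icc (0:ℝ) 1).Nonempty) hgc.continuousOn
    have hcmax : ∀ t ∈ Set.Icc (0:ℝ) 1, g t ≤ g ts := fun t ht => htsmax ht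
    by_cases hcneg : g ts ≤ 0
    · intro t ht; exact le_trans (hcmax t ht) hcneg
    push_neg at hcneg
    exfalso
    set A := {t : ℝ | t ∈ Set.Icc (0:ℝ) 1 ∧ g t = g ts} with hA
    have hAclosed : IsClosed A := by
      have : A = Set.Icc (0:ℝ) 1 ∩ g ⁻¹' {g ts} := by
        ext t; simp [hA]
      rw [this]
      exact isClosed_Icc.inter (isClosed_singleton.preimage hgc)
    have hAne : A.Nonempty := ⟨ts, htsI, rfl⟩
    have hAbdd : BddBelow A := BddBelow.mono (fun t ht => ht.1) bddBelow_Icc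
    set t₀ := sInf A with ht₀
    have ht₀A : t₀ ∈ A := hAclosed.csInf_mem hAne hAbdd
    have ht₀I : t₀ ∈ Set.Icc (0:ℝ) 1 := ht₀A.1
    have hgt₀ : g t₀ = g ts := ht₀A.2
    have ht₀0 : t₀ ≠ 0 := by intro h; rw [h, h0] at hgt₀; linarith
    have ht₀1 : t₀ ≠ 1 := by intro h; rw [h, h1] at hgt₀; linarith
    have ht₀pos : 0 < t₀ := lt_of_le_of_ne ht₀I.1 (Ne.symm ht₀0)
    have ht₀lt : t₀ < 1 := lt_of_le_of_ne ht₀I.2 ht₀1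
    obtain ⟨h, hdefh⟩ : ∃ h : ℝ, h = min t₀ (1 - t₀) := ⟨_, rfl⟩
    have hhpos : 0 < h := by rw [hdefh]; exact lt_min ht₀pos (by linarith)
    have hh1 : h ≤ t₀ := by rw [hdefh]; exact min_le_left _ _
    have hh2 : h ≤ 1 - t₀ := by rw [hdefh]; exact min_le_right _ _
    have hmem1 : t₀ - h ∈ Set.Icc (0:ℝ) 1 := by
      constructor <;> [linarith; linarith [ht₀I.2]]
    have hmem2 : t₀ + h ∈ Set.Icc (0:ℝ) 1 := by
      constructor <;> [linarith [ht₀I.1]; linarith]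
    have hmd := hgmid (t₀ - h) (t₀ + h)
    have : (t₀ - h + (t₀ + h)) / 2 = t₀ := by ring
    rw [this, hgt₀] at hmd
    have hle2 : g (t₀ + h) ≤ g ts := hcmax _ hmem2
    have hge1 : g ts ≤ g (t₀ - h) := by linarith
    have hle1 : g (t₀ - h) ≤ g ts := hcmax _ hmem1
    have heq1 : g (t₀ - h) = g ts := le_antisymm hle1 hge1
    have hmemA : t₀ - h ∈ A := ⟨hmem1, heq1⟩
    have := csInf_le hAbdd hmemA
    rw [← ht₀] at this
    linarith
  have hb1 : b ≤ 1 := by linarith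
  have hkb := key b ⟨hb, hb1⟩
  rw [hg] at hkb
  simp only at hkb
  have hpt : γ b = a • x + b • y := by
    rw [hγ]
    simp only
    have ha' : a = 1 - b := by linarith
    rw [ha', smul_sub, sub_smul, one_smul]
    abel
  rw [hpt] at hkb
  have : (1 - b) = a := by linarith
  rw [this] at hkb
  simp only [smul_eq_mul]
  linarith

end F

variable {n : ℕ}
local notation "E" => EuclideanSpace ℝ (Fin n)

lemma norm_gradient_eq (u : E → ℝ) (x : E) : ‖gradient u x‖ = ‖fderiv ℝ u x‖ := by
  rw [gradient]
  exact LinearIsometryEquiv.norm_map _ _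

lemma hasDerivAt_line (u : E → ℝ) (hu : ContDiff ℝ 2 u) (x v : E) (t : ℝ) :
    HasDerivAt (fun s : ℝ => u (x + s • v)) (fderiv ℝ u (x + t • v) v) t := by
  have hline : HasDerivAt (fun s : ℝ => x + s • v) v t := by
    simpa using ((hasDerivAt_id t).smul_const v).const_add x
  have hdiff : HasFDerivAt u (fderiv ℝ u (x + t • v)) (x + t • v) :=
    (hu.differentiable (by norm_num) (x + t • v)).hasFDerivAt
  exact hdiff.comp_hasDerivAt t hline

lemma contDiff_dline (u : E → ℝ) (hu : ContDiff ℝ 2 u) (v : E) :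
    ContDiff ℝ 1 (fun y => fderiv ℝ u y v) := by
  have h1 : ContDiff ℝ 1 (fderiv ℝ u) := hu.fderiv_right (by norm_num)
  exact (ContinuousLinearMap.apply ℝ ℝ v).contDiff.comp h1

lemma hasDerivAt_line' (u : E → ℝ) (hu : ContDiff ℝ 2 u) (x v : E) (t : ℝ) :
    HasDerivAt (fun s : ℝ => fderiv ℝ u (x + s • v) v)
      (fderiv ℝ (fun y => fderiv ℝ u y v) (x + t • v) v) t := by
  have hline : HasDerivAt (fun s : ℝ => x + s • v) v t := by
    simpa using ((hasDerivAt_id t).smul_const v).const_add x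
  have hdiff : HasFDerivAt (fun y => fderiv ℝ u y v)
      (fderiv ℝ (fun y => fderiv ℝ u y v) (x + t • v)) (x + t • v) :=
    (((contDiff_dline u hu v).differentiable (by norm_num)) (x + t • v)).hasFDerivAt
  exact hdiff.comp_hasDerivAt t hline

lemma continuous_D2 (u : E → ℝ) (hu : ContDiff ℝ 2 u) (v : E) :
    Continuous (fun y => fderiv ℝ (fun z => fderiv ℝ u z v) y v) := by
  have h1 : ContDiff ℝ 1 (fun y => fderiv ℝ u y v) := contDiff_dline u hu v
  have h2 : Continuous (fderiv ℝ (fun y => fderiv ℝ u y v)) := h1.continuous_fderiv (by norm_num)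
  exact (ContinuousLinearMap.apply ℝ ℝ v).continuous.comp h2

/-- If `lap u ≥ K` on a closed unit ball and `u` has Lipschitz-type bound 1,
then `K ≤ 2n+1`. -/
lemma lap_bound_on_ball (u : E → ℝ) (hu : ContDiff ℝ 2 u)
    (hLip : ∀ x y : E, u x - u y ≤ ‖x - y‖) (z : E) (K : ℝ)
    (hK : ∀ x ∈ Metric.closedBall z 1, K ≤ lap u x) : K ≤ 2 * n + 1 := by
  by_contra hcon
  push_neg at hcon
  have hn : 0 < n := by
    rcases Nat.eq_zero_or_pos n with h0 | h; swap; exact h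
    subst h0
    have hz := hK z (Metric.mem_closedBall_self zero_le_one)
    rw [lap] at hz
    simp at hz
    norm_num at hcon
    linarith
  set a : ℝ := (K - 1) / (2 * n) with ha
  have hnR : (0:ℝ) < 2 * n := by positivity
  have ha1 : 1 < a := by
    rw [ha, lt_div_iff₀ hnR]
    push_cast at hcon ⊢
    linarith
  set w : E → ℝ := fun x => u x - a * ‖x - z‖ ^ 2 with hw
  have hwc : Continuous w := by
    refine (hu.continuous).sub (continuous_const.mul ?_)
    exact ((continuous_id.sub continuous_const).norm).pow 2
  obtain ⟨p, hpB, hpmax⟩ := (isCompact_closedBall z 1).exists_isMaxOn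
    ⟨z, Metric.mem_closedBall_self zero_le_one⟩ hwc.continuousOn
  by_cases hpint : p ∈ Metric.ball z 1
  · -- interior case
    have hloc : IsLocalMax w p :=
      hpmax.isLocalMax (Filter.mem_of_superset (Metric.isOpen_ball.mem_nhds hpint)
        Metric.ball_subset_closedBall)
    have key : ∀ i : Fin n,
        fderiv ℝ (fun y => fderiv ℝ u y (EuclideanSpace.single i (1:ℝ))) p
          (EuclideanSpace.single i (1:ℝ)) ≤ 2 * a := by
      intro i
      set e : E := EuclideanSpace.single i (1:ℝ) with he
      have hee : ‖e‖ = 1 := by rw [he, EuclideanSpace.norm_single]; norm_num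
      set c' : E := p - z with hc'
      set ip : ℝ := inner ℝ c' e with hip
      set φ : ℝ → ℝ := fun t => u (p + t • e) - a * (‖c'‖^2 + 2*t*ip + t^2) with hφ
      have hconv : ∀ t : ℝ, w (p + t • e) = φ t := by
        intro t
        rw [hφ, hw]
        simp only
        congr 2
        have : p + t • e - z = c' + t • e := by rw [hc']; abel
        rw [this, @norm_add_sq_real, real_inner_smul_right, norm_smul]
        simp [hee, hip, mul_pow]
        ring
      have hlocφ : IsLocalMax φ 0 := by
        have htend : Filter.Tendsto (fun t : ℝ => p + t • e) (nhds 0) (nhds p) := by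
          have : Continuous (fun t : ℝ => p + t • e) :=
            continuous_const.add (continuous_id.smul continuous_const)
          have h0 := this.tendsto 0
          simpa using h0
        have := htend.eventually hloc
        refine Filter.Eventually.mono this ?_
        intro t ht
        rw [← hconv t]
        calc w (p + t • e) ≤ w p := ht
          _ = φ 0 := by rw [← hconv 0]; simp
      set φ' : ℝ → ℝ := fun t => fderiv ℝ u (p + t • e) e - a * (2*ip + 2*t) with hφ'
      set φ'' : ℝ → ℝ := fun t =>
        fderiv ℝ (fun y => fderiv ℝ u y e) (p + t • e) e - a * 2 with hφ''
      have hd1 : ∀ t, HasDerivAt φ (φ' t) t := by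
        intro t
        have hq : HasDerivAt (fun t : ℝ => ‖c'‖^2 + 2*t*ip + t^2) (2*ip + 2*t) t := by
          have h1 : HasDerivAt (fun t : ℝ => 2*t*ip) (2*ip) t := by
            simpa using ((hasDerivAt_id t).const_mul 2).mul_const ip
          have h2 : HasDerivAt (fun t : ℝ => t^2) (2*t) t := by
            simpa using hasDerivAt_pow 2 t
          exact (h1.const_add (‖c'‖^2)).add h2
        exact (hasDerivAt_line u hu p e t).sub (hq.const_mul a)
      have hd2 : ∀ t, HasDerivAt φ' (φ'' t) t := by
        intro t
        have hq : HasDerivAt (fun t : ℝ => 2*ip + 2*t) (2:ℝ) t := by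
          simpa using ((hasDerivAt_id t).const_mul 2).const_add (2*ip)
        exact (hasDerivAt_line' u hu p e t).sub (hq.const_mul a)
      have hcc : Continuous φ'' := by
        refine Continuous.sub ?_ continuous_const
        exact (continuous_D2 u hu e).comp
          (continuous_const.add (continuous_id.smul continuous_const))
      have := second_deriv_nonpos_of_isLocalMax hd1 hd2 hcc hlocφ
      rw [hφ''] at this
      simp only at this
      have h0e : p + (0:ℝ) • e = p := by simp
      rw [h0e] at this
      linarith
    have hlapp : lap u p ≤ 2 * a * n := by
      rw [lap]
      calc (∑ i, fderiv ℝ (fun y => fderiv ℝ u y (EuclideanSpace.single i (1:ℝ))) p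
          (EuclideanSpace.single i (1:ℝ))) ≤ ∑ _i : Fin n, 2 * a :=
            Finset.sum_le_sum (fun i _ => key i)
        _ = 2 * a * n := by rw [Finset.sum_const]; simp [mul_comm]
    have hKp := hK p (Metric.ball_subset_closedBall hpint)
    have : 2 * a * n = K - 1 := by
      rw [ha]
      field_simp
    linarith
  · -- boundary case
    have hdist : ‖p - z‖ = 1 := by
      have h1 : dist p z ≤ 1 := Metric.mem_closedBall.1 hpB
      have h2 : ¬ dist p z < 1 := fun h => hpint (Metric.mem_ball.2 h)
      rw [← dist_eq_norm]
      linarith [le_of_not_gt h2]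
    have hwz := hpmax (Metric.mem_closedBall_self zero_le_one)
    rw [hw] at hwz
    simp only at hwz
    rw [hdist] at hwz
    have : u z - a * ‖z - z‖^2 = u z := by simp
    have hlip := hLip p z
    rw [hdist] at hlip
    -- w z ≤ w p : u z ≤ u p - a
    have : a ≤ u p - u z := by
      have : u z - a * ‖z - z‖ ^ 2 ≤ u p - a * 1 ^ 2 := hwz
      simp at this
      linarith
    linarith

lemma growth_bound (u : E → ℝ) (hcont : Continuous u)
    (hgrow : Tendsto (fun x : E => u x / ‖x‖) (cocompact E) (nhds 1))
    (η : ℝ) (hη : 0 < η) (hη1 : η < 1) :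
    ∃ C : ℝ, ∀ x : E, (1 - η) * ‖x‖ - C ≤ u x := by
  have hmem : Set.Ioi (1 - η) ∈ nhds (1:ℝ) :=
    isOpen_Ioi.mem_nhds (Set.mem_Ioi.2 (by linarith))
  have hS : {x : E | 1 - η < u x / ‖x‖} ∈ cocompact E := hgrow hmem
  obtain ⟨t, htc, hsub⟩ := Filter.mem_cocompact.1 hS
  obtain ⟨R, hR⟩ := htc.isBounded.subset_closedBall 0
  set R' : ℝ := max R 0 + 1 with hR'
  have hR'1 : 1 ≤ R' := by
    have := le_max_right R 0
    rw [hR']; linarith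
  obtain ⟨x₀, hx₀B, hx₀min⟩ := (isCompact_closedBall (0:E) R').exists_isMinOn
    ⟨0, Metric.mem_closedBall_self (by linarith)⟩ hcont.continuousOn
  set m := u x₀ with hm
  refine ⟨max 0 ((1 - η) * R' - m), fun x => ?_⟩
  by_cases hx : ‖x‖ ≤ R'
  · have h1 : m ≤ u x := hx₀min (by simpa [Metric.mem_closedBall, dist_eq_norm] using hx)
    have h2 : (1 - η) * ‖x‖ ≤ (1 - η) * R' :=
      mul_le_mul_of_nonneg_left hx (by linarith)
    have h3 : (1 - η) * R' - m ≤ max 0 ((1 - η) * R' - m) := le_max_right _ _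
    linarith
  · push_neg at hx
    have hxt : x ∈ tᶜ := by
      intro hxt
      have h := Metric.mem_closedBall.1 (hR hxt)
      rw [dist_eq_norm, sub_zero] at h
      have := le_max_left R 0
      rw [hR'] at hx
      linarith
    have hxS : 1 - η < u x / ‖x‖ := hsub hxt
    have hxpos : (0:ℝ) < ‖x‖ := by linarith
    have hfin : (1 - η) * ‖x‖ < u x := (lt_div_iff₀ hxpos).1 hxS
    have : (0:ℝ) ≤ max 0 ((1 - η) * R' - m) := le_max_left _ _
    linarith

lemma bounded_below (u : E → ℝ) (hcont : Continuous u)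
    (hgrow : Tendsto (fun x : E => u x / ‖x‖) (cocompact E) (nhds 1)) :
    ∃ M : ℝ, ∀ x : E, -M ≤ u x := by
  obtain ⟨C, hC⟩ := growth_bound u hcont hgrow (1/2) (by norm_num) (by norm_num)
  refine ⟨C, fun x => ?_⟩
  have h1 := hC x
  have h2 : (0:ℝ) ≤ (1 - 1/2) * ‖x‖ := by positivity
  linarith

lemma lip_of_grad (u : E → ℝ) (hu : ContDiff ℝ 2 u)
    (hgr : ∀ x : E, ‖fderiv ℝ u x‖ ≤ 1) : ∀ x y : E, u x - u y ≤ ‖x - y‖ := by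
  intro x y
  have h := Convex.norm_image_sub_le_of_norm_fderiv_le
    (f := u) (C := 1) (s := (Set.univ : Set E))
    (fun z _ => hu.differentiable (by norm_num) z)
    (fun z _ => hgr z) convex_univ (Set.mem_univ y) (Set.mem_univ x)
  rw [Real.norm_eq_abs, one_mul] at h
  calc u x - u y ≤ |u x - u y| := le_abs_self _
    _ ≤ ‖x - y‖ := h

lemma f_bounded_below (δ : ℝ) (hδ : 0 < δ) (u f : E → ℝ) (hu : ContDiff ℝ 2 u)
    (hfcont : Continuous f) (hfconv : ConvexOn ℝ Set.univ f)
    (Mu : ℝ) (hMu : ∀ x : E, -Mu ≤ u x) (hLip : ∀ x y : E, u x - u y ≤ ‖x - y‖)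
    (hlow : ∀ x : E, δ * u x - lap u x - f x ≤ 0) :
    ∃ M : ℝ, ∀ x : E, -M ≤ f x := by
  by_contra hcon
  push_neg at hcon
  obtain ⟨q, hqB, hqmax⟩ := (isCompact_closedBall (0:E) 2).exists_isMaxOn
    ⟨0, Metric.mem_closedBall_self (by norm_num)⟩ hfcont.continuousOn
  set C0 := f q with hC0
  set M₀ : ℝ := |C0| + 2 * δ * Mu + 2 * (2 * n + 2) with hM₀
  obtain ⟨z, hz⟩ := hcon M₀
  set z' : E := (2:ℝ)⁻¹ • z with hz'
  have hball : ∀ x ∈ Metric.closedBall z' 1, (2 * n + 2 : ℝ) ≤ lap u x := by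
    intro x hx
    set y : E := (2:ℝ) • x - z with hy
    have hxy : ((2:ℝ)⁻¹) • z + ((2:ℝ)⁻¹) • y = x := by
      rw [hy, smul_sub, smul_smul]
      norm_num
    have hynorm : ‖y‖ ≤ 2 := by
      have hd : ‖x - z'‖ ≤ 1 := by
        rw [← dist_eq_norm]; exact Metric.mem_closedBall.1 hx
      have : y = (2:ℝ) • (x - z') := by
        rw [hy, hz', smul_sub, smul_smul]; norm_num
      rw [this, norm_smul]
      simp only [Real.norm_ofNat]
      linarith
    have hfy : f y ≤ C0 := by
      refine hqmax ?_
      rw [Metric.mem_closedBall, dist_eq_norm, sub_zero]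
      exact hynorm
    have hmid : f x ≤ (1/2) * f z + (1/2) * f y := by
      have := hfconv.2 (Set.mem_univ z) (Set.mem_univ y)
        (by norm_num : (0:ℝ) ≤ 1/2) (by norm_num : (0:ℝ) ≤ 1/2) (by norm_num)
      simpa [hxy] using this
    have hux : -Mu ≤ u x := hMu x
    have hlap : δ * u x - f x ≤ lap u x := by linarith [hlow x]
    have h1 : δ * u x ≥ -(δ * Mu) := by nlinarith
    have h2 : f x ≤ (1/2) * (-M₀) + (1/2) * C0 := by
      have : (1/2 : ℝ) * f z ≤ (1/2) * (-M₀) := by linarith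
      linarith
    have hc0 : C0 ≤ |C0| := le_abs_self _
    rw [hM₀] at h2
    push_cast at h2 ⊢
    nlinarith [abs_nonneg C0]
  have := lap_bound_on_ball u hu hLip z' (2 * n + 2) hball
  push_cast at this
  linarith

lemma eps_ineq (δ : ℝ) (hδ : 0 < δ) (u f : E → ℝ) (hu : ContDiff ℝ 2 u)
    (hfconv : ConvexOn ℝ Set.univ f)
    (hgrow : Tendsto (fun x : E => u x / ‖x‖) (cocompact E) (nhds 1))
    (hLip : ∀ x y : E, u x - u y ≤ ‖x - y‖)
    (hle1 : ∀ x : E, δ * u x - lap u x - f x ≤ 0)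
    (heqn : ∀ x : E, ‖fderiv ℝ u x‖ < 1 → δ * u x = lap u x + f x)
    (hgle : ∀ x : E, ‖fderiv ℝ u x‖ ≤ 1)
    (Mf : ℝ) (hMf : ∀ x : E, -Mf ≤ f x)
    (ε : ℝ) (hε0 : 0 < ε) (hε1 : ε < 1) (x y : E) :
    δ * (ε * u ((2:ℝ)⁻¹ • (x + y)) - (u x + u y) / 2) ≤ (1 - ε) * Mf := by
  have hucont : Continuous u := hu.continuous
  obtain ⟨C, hC⟩ := growth_bound u hucont hgrow ((1 - ε)/2) (by linarith) (by linarith)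
  set G : E × E → ℝ := fun p => ε * u ((2:ℝ)⁻¹ • (p.1 + p.2)) - (u p.1 + u p.2) / 2
    with hG
  have hGcont : Continuous G := by
    apply Continuous.sub
    · exact continuous_const.mul (hucont.comp
        (by fun_prop))
    · exact (((hucont.comp continuous_fst).add (hucont.comp continuous_snd)).div_const 2)
  have hGval : ∀ p : E × E, G p = ε * u ((2:ℝ)⁻¹ • (p.1 + p.2)) - (u p.1 + u p.2) / 2 :=
    fun p => by rw [hG]
  clear_value G
  -- coercivity
  have hcoer : ∀ p : E × E, G p ≤ (ε * u 0 + C) - ((1 - ε)/4) * ‖p‖ := by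
    intro p
    have h1 : u ((2:ℝ)⁻¹ • (p.1 + p.2)) ≤ u 0 + (‖p.1‖ + ‖p.2‖) / 2 := by
      have hl := hLip ((2:ℝ)⁻¹ • (p.1 + p.2)) 0
      rw [sub_zero] at hl
      have : ‖(2:ℝ)⁻¹ • (p.1 + p.2)‖ ≤ (‖p.1‖ + ‖p.2‖) / 2 := by
        rw [norm_smul]
        have := norm_add_le p.1 p.2
        rw [norm_inv, Real.norm_ofNat]
        linarith
      linarith
    have h2 : (1 - (1 - ε)/2) * ‖p.1‖ - C ≤ u p.1 := hC p.1
    have h3 : (1 - (1 - ε)/2) * ‖p.2‖ - C ≤ u p.2 := hC p.2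
    have h4 : ‖p‖ ≤ ‖p.1‖ + ‖p.2‖ := by
      rw [Prod.norm_def]
      exact max_le (by linarith [norm_nonneg p.2]) (by linarith [norm_nonneg p.1])
    have h5 : ε * u ((2:ℝ)⁻¹ • (p.1 + p.2)) ≤ ε * (u 0 + (‖p.1‖ + ‖p.2‖) / 2) :=
      mul_le_mul_of_nonneg_left h1 hε0.le
    rw [hGval p]
    nlinarith [norm_nonneg p.1, norm_nonneg p.2, norm_nonneg p]
  -- existence of a global max
  have hcpos : (0:ℝ) < (1 - ε)/4 := by linarith
  obtain ⟨A, hA⟩ : ∃ A : ℝ, A = ε * u 0 + C := ⟨_, rfl⟩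
  rw [← hA] at hcoer
  obtain ⟨R, hR⟩ : ∃ R : ℝ, R = max 1 ((A - (G (0,0) - 1)) / ((1 - ε)/4)) := ⟨_, rfl⟩
  have hR1 : (1:ℝ) ≤ R := by rw [hR]; exact le_max_left _ _
  have hfar : ∀ p : E × E, R ≤ ‖p‖ → G p ≤ G (0,0) - 1 := by
    intro p hp
    have h1 := hcoer p
    have h2 : (A - (G (0,0) - 1)) / ((1 - ε)/4) ≤ R := by rw [hR]; exact le_max_right _ _
    have h3 : (A - (G (0,0) - 1)) ≤ ((1 - ε)/4) * R := by
      rw [div_le_iff₀ hcpos] at h2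
      linarith
    have h4 : ((1 - ε)/4) * R ≤ ((1 - ε)/4) * ‖p‖ :=
      mul_le_mul_of_nonneg_left hp hcpos.le
    linarith
  obtain ⟨pb, hpbB, hpbmax⟩ := (isCompact_closedBall (0 : E × E) R).exists_isMaxOn
    ⟨0, Metric.mem_closedBall_self (by linarith)⟩ hGcont.continuousOn
  have hglobal : ∀ q : E × E, G q ≤ G pb := by
    intro q
    by_cases hq : q ∈ Metric.closedBall (0 : E × E) R
    · exact hpbmax hq
    · have hq' : R ≤ ‖q‖ := by
        rw [Metric.mem_closedBall, dist_zero_right, not_le] at hq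
        linarith
      have h0in : (0 : E × E) ∈ Metric.closedBall (0 : E × E) R :=
        Metric.mem_closedBall_self (by linarith)
      have h00 : G (0,0) ≤ G pb := by
        have h := hpbmax h0in
        exact h
      have := hfar q hq'
      linarith

  obtain ⟨xb, yb⟩ := pb
  obtain ⟨mb, hmb⟩ : ∃ m : EuclideanSpace ℝ (Fin n), m = (2:ℝ)⁻¹ • (xb + yb) := ⟨_, rfl⟩
  have hGpb : G (xb, yb) = ε * u mb - (u xb + u yb) / 2 := by
    rw [hGval (xb, yb), hmb]
  -- first order conditions
  have hfo1 : ∀ v : EuclideanSpace ℝ (Fin n),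
      fderiv ℝ u xb v = ε * fderiv ℝ u mb v := by
    intro v
    obtain ⟨w, hw⟩ : ∃ w : EuclideanSpace ℝ (Fin n), w = (2:ℝ)⁻¹ • v := ⟨_, rfl⟩
    obtain ⟨φ, hφ⟩ : ∃ φ : ℝ → ℝ,
        φ = fun t => ε * u (mb + t • w) - (u (xb + t • v) + u yb) / 2 := ⟨_, rfl⟩
    have hφeq : ∀ t, φ t = G (xb + t • v, yb) := by
      intro t
      rw [hφ, hGval (xb + t • v, yb)]
      simp only
      congr 3
      rw [hmb, hw]
      module
    have hmax : IsLocalMax φ 0 := by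
      refine Filter.Eventually.of_forall fun t => ?_
      have h1 : φ t = G (xb + t • v, yb) := hφeq t
      have h2 : φ 0 = G (xb, yb) := by rw [hφeq 0]; simp
      rw [h1, h2]
      exact hglobal _
    have hd : ∀ t, HasDerivAt φ
        (ε * fderiv ℝ u (mb + t • w) w - fderiv ℝ u (xb + t • v) v / 2) t := by
      intro t
      rw [hφ]
      exact ((hasDerivAt_line u hu mb w t).const_mul ε).sub
        (((hasDerivAt_line u hu xb v t).add_const (u yb)).div_const 2)
    have h0 := hmax.hasDerivAt_eq_zero (hd 0)
    simp only [zero_smul, add_zero] at h0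
    have hwv : fderiv ℝ u mb w = 2⁻¹ * fderiv ℝ u mb v := by
      rw [hw, (fderiv ℝ u mb).map_smul, smul_eq_mul]
    rw [hwv] at h0
    linarith
  have hfo2 : ∀ v : EuclideanSpace ℝ (Fin n),
      fderiv ℝ u yb v = ε * fderiv ℝ u mb v := by
    intro v
    obtain ⟨w, hw⟩ : ∃ w : EuclideanSpace ℝ (Fin n), w = (2:ℝ)⁻¹ • v := ⟨_, rfl⟩
    obtain ⟨φ, hφ⟩ : ∃ φ : ℝ → ℝ,
        φ = fun t => ε * u (mb + t • w) - (u xb + u (yb + t • v)) / 2 := ⟨_, rfl⟩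
    have hφeq : ∀ t, φ t = G (xb, yb + t • v) := by
      intro t
      rw [hφ, hGval (xb, yb + t • v)]
      simp only
      congr 3
      rw [hmb, hw]
      module
    have hmax : IsLocalMax φ 0 := by
      refine Filter.Eventually.of_forall fun t => ?_
      have h1 : φ t = G (xb, yb + t • v) := hφeq t
      have h2 : φ 0 = G (xb, yb) := by rw [hφeq 0]; simp
      rw [h1, h2]
      exact hglobal _
    have hd : ∀ t, HasDerivAt φ
        (ε * fderiv ℝ u (mb + t • w) w - (0 + fderiv ℝ u (yb + t • v) v) / 2) t := by
      intro t
      rw [hφ]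
      have h2 : HasDerivAt (fun t : ℝ => u xb + u (yb + t • v))
          (0 + fderiv ℝ u (yb + t • v) v) t :=
        (hasDerivAt_const t (u xb)).add (hasDerivAt_line u hu yb v t)
      exact ((hasDerivAt_line u hu mb w t).const_mul ε).sub (h2.div_const 2)
    have h0 := hmax.hasDerivAt_eq_zero (hd 0)
    simp only [zero_smul, add_zero, zero_add] at h0
    have hwv : fderiv ℝ u mb w = 2⁻¹ * fderiv ℝ u mb v := by
      rw [hw, (fderiv ℝ u mb).map_smul, smul_eq_mul]
    rw [hwv] at h0
    linarith
  -- gradient norms at xb, yb are < 1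
  have hnormlt : ∀ z : EuclideanSpace ℝ (Fin n),
      (∀ v, fderiv ℝ u z v = ε * fderiv ℝ u mb v) → ‖fderiv ℝ u z‖ < 1 := by
    intro z hz
    have hzz : fderiv ℝ u z = ε • fderiv ℝ u mb := by
      refine ContinuousLinearMap.ext fun v => ?_
      rw [hz v, ContinuousLinearMap.smul_apply, smul_eq_mul]
    rw [hzz, norm_smul, Real.norm_eq_abs, abs_of_pos hε0]
    calc ε * ‖fderiv ℝ u mb‖ ≤ ε * 1 := mul_le_mul_of_nonneg_left (hgle mb) hε0.le
      _ < 1 := by linarith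
  have hxbeq : δ * u xb = lap u xb + f xb := heqn xb (hnormlt xb hfo1)
  have hybeq : δ * u yb = lap u yb + f yb := heqn yb (hnormlt yb hfo2)
  -- second order condition
  have hso : ∀ i : Fin n,
      ε * fderiv ℝ (fun z => fderiv ℝ u z (EuclideanSpace.single i (1:ℝ))) mb
          (EuclideanSpace.single i (1:ℝ)) ≤
        (fderiv ℝ (fun z => fderiv ℝ u z (EuclideanSpace.single i (1:ℝ))) xb
          (EuclideanSpace.single i (1:ℝ)) +
         fderiv ℝ (fun z => fderiv ℝ u z (EuclideanSpace.single i (1:ℝ))) yb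
          (EuclideanSpace.single i (1:ℝ))) / 2 := by
    intro i
    obtain ⟨v, hv⟩ : ∃ v : EuclideanSpace ℝ (Fin n),
      v = EuclideanSpace.single i (1:ℝ) := ⟨_, rfl⟩
    rw [← hv]
    obtain ⟨φ, hφ⟩ : ∃ φ : ℝ → ℝ,
        φ = fun t => ε * u (mb + t • v) - (u (xb + t • v) + u (yb + t • v)) / 2 := ⟨_, rfl⟩
    have hφeq : ∀ t, φ t = G (xb + t • v, yb + t • v) := by
      intro t
      rw [hφ, hGval (xb + t • v, yb + t • v)]
      simp only
      congr 3
      rw [hmb]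
      module
    have hmax : IsLocalMax φ 0 := by
      refine Filter.Eventually.of_forall fun t => ?_
      have h1 : φ t = G (xb + t • v, yb + t • v) := hφeq t
      have h2 : φ 0 = G (xb, yb) := by rw [hφeq 0]; simp
      rw [h1, h2]
      exact hglobal _
    have hd1 : ∀ t, HasDerivAt φ
        (ε * fderiv ℝ u (mb + t • v) v -
          (fderiv ℝ u (xb + t • v) v + fderiv ℝ u (yb + t • v) v) / 2) t := by
      intro t
      rw [hφ]
      exact ((hasDerivAt_line u hu mb v t).const_mul ε).sub
        (((hasDerivAt_line u hu xb v t).add (hasDerivAt_line u hu yb v t)).div_const 2)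
    have hd2 : ∀ t, HasDerivAt (fun t : ℝ => ε * fderiv ℝ u (mb + t • v) v -
          (fderiv ℝ u (xb + t • v) v + fderiv ℝ u (yb + t • v) v) / 2)
        (ε * fderiv ℝ (fun z => fderiv ℝ u z v) (mb + t • v) v -
          (fderiv ℝ (fun z => fderiv ℝ u z v) (xb + t • v) v +
           fderiv ℝ (fun z => fderiv ℝ u z v) (yb + t • v) v) / 2) t := by
      intro t
      exact ((hasDerivAt_line' u hu mb v t).const_mul ε).sub
        (((hasDerivAt_line' u hu xb v t).add (hasDerivAt_line' u hu yb v t)).div_const 2)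
    have haff : ∀ z : EuclideanSpace ℝ (Fin n),
        Continuous (fun t : ℝ => z + t • v) :=
      fun z => continuous_const.add (continuous_id.smul continuous_const)
    have hcc : Continuous (fun t : ℝ => ε * fderiv ℝ (fun z => fderiv ℝ u z v) (mb + t • v) v -
          (fderiv ℝ (fun z => fderiv ℝ u z v) (xb + t • v) v +
           fderiv ℝ (fun z => fderiv ℝ u z v) (yb + t • v) v) / 2) := by
      refine Continuous.sub (continuous_const.mul ?_) (Continuous.div_const (Continuous.add ?_ ?_) 2)
      · exact (continuous_D2 u hu v).comp (haff mb)
      · exact (continuous_D2 u hu v).comp (haff xb)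
      · exact (continuous_D2 u hu v).comp (haff yb)
    have := second_deriv_nonpos_of_isLocalMax hd1 hd2 hcc hmax
    simp only [zero_smul, add_zero] at this
    linarith
  -- sum over i
  have hsum : ε * lap u mb ≤ (lap u xb + lap u yb) / 2 := by
    rw [lap, lap, lap, Finset.mul_sum]
    calc (∑ i, ε * fderiv ℝ (fun z => fderiv ℝ u z (EuclideanSpace.single i (1:ℝ))) mb
            (EuclideanSpace.single i (1:ℝ)))
        ≤ ∑ i, (fderiv ℝ (fun z => fderiv ℝ u z (EuclideanSpace.single i (1:ℝ))) xb
            (EuclideanSpace.single i (1:ℝ)) +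
           fderiv ℝ (fun z => fderiv ℝ u z (EuclideanSpace.single i (1:ℝ))) yb
            (EuclideanSpace.single i (1:ℝ))) / 2 :=
          Finset.sum_le_sum (fun i _ => hso i)
      _ = _ := by
          rw [← Finset.sum_div, Finset.sum_add_distrib]
  -- convexity of f at midpoint
  have hconvf : f mb ≤ (f xb + f yb) / 2 := by
    have h := hfconv.2 (Set.mem_univ xb) (Set.mem_univ yb)
      (by norm_num : (0:ℝ) ≤ 1/2) (by norm_num : (0:ℝ) ≤ 1/2) (by norm_num : (1:ℝ)/2 + 1/2 = 1)
    have hpt : (1/2 : ℝ) • xb + (1/2 : ℝ) • yb = mb := by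
      rw [hmb]; module
    rw [hpt] at h
    rw [smul_eq_mul, smul_eq_mul] at h
    linarith
  -- combine
  have hmb1 : δ * u mb ≤ lap u mb + f mb := by linarith [hle1 mb]
  have t1 : ε * (δ * u mb) ≤ ε * (lap u mb + f mb) :=
    mul_le_mul_of_nonneg_left hmb1 hε0.le
  have t4 : 0 ≤ (1 - ε) * (Mf + f mb) :=
    mul_nonneg (by linarith) (by linarith [hMf mb])
  have hfinal : δ * G (xb, yb) ≤ (1 - ε) * Mf := by
    rw [hGpb]
    linarith [t1, hsum, hconvf, t4, hxbeq, hybeq]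
  have hxy := hglobal (x, y)
  rw [hGval (x, y)] at hxy
  simp only at hxy
  have := mul_le_mul_of_nonneg_left hxy hδ.le
  linarith

lemma limit_step (δ Mf L B : ℝ) (hδ : 0 < δ)
    (h : ∀ ε : ℝ, 0 < ε → ε < 1 → δ * (ε * L - B) ≤ (1 - ε) * Mf) : L ≤ B := by
  by_contra hc
  push_neg at hc
  obtain ⟨T, hT⟩ : ∃ T : ℝ, T = δ * |L| + |Mf| + 1 := ⟨_, rfl⟩
  have hTpos : 0 < T := by
    rw [hT]
    have h1 := abs_nonneg L
    have h2 := abs_nonneg Mf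
    nlinarith
  obtain ⟨s, hs⟩ : ∃ s : ℝ, s = min (1/2) ((L - B) * δ / (2 * T)) := ⟨_, rfl⟩
  have hspos : 0 < s := by
    rw [hs]
    refine lt_min (by norm_num) ?_
    have h1 : 0 < (L - B) * δ := mul_pos (by linarith) hδ
    positivity
  have hshalf : s ≤ 1/2 := by rw [hs]; exact min_le_left _ _
  have hsle : s ≤ (L - B) * δ / (2 * T) := by rw [hs]; exact min_le_right _ _
  have hkey := h (1 - s) (by linarith) (by linarith)
  have h2 : s * (Mf + δ * L) ≤ s * T := by
    refine mul_le_mul_of_nonneg_left ?_ hspos.le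
    have h3 : Mf ≤ |Mf| := le_abs_self _
    have h4 : δ * L ≤ δ * |L| := mul_le_mul_of_nonneg_left (le_abs_self _) hδ.le
    rw [hT]; linarith
  have h3 : s * T ≤ ((L - B) * δ / (2 * T)) * T := mul_le_mul_of_nonneg_right hsle hTpos.le
  have h4 : ((L - B) * δ / (2 * T)) * T = (L - B) * δ / 2 := by
    field_simp
  have h5 : 0 < δ * (L - B) := mul_pos hδ (by linarith)
  nlinarith [hkey, h2, h3, h4, h5]

end Stmt6Aux

open Stmt6Aux in
theorem stmt6 {n : ℕ} (δ : ℝ) (hδ : 0 < δ)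
    (u f : EuclideanSpace ℝ (Fin n) → ℝ)
    (hu : ContDiff ℝ 2 u)
    (hfconv : ConvexOn ℝ Set.univ f)
    (heq : ∀ x, max (δ * u x - lap u x - f x) (‖gradient u x‖ - 1) = 0)
    (hgrow : Tendsto (fun x : EuclideanSpace ℝ (Fin n) => u x / ‖x‖)
      (cocompact (EuclideanSpace ℝ (Fin n))) (nhds 1)) :
    ConvexOn ℝ Set.univ u := by
  have hucont : Continuous u := hu.continuous
  have hfcont : Continuous f := by
    have h := hfconv.continuousOn_interior
    rw [interior_univ] at h
    rw [← continuousOn_univ]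
    exact h
  have hle1 : ∀ x, δ * u x - lap u x - f x ≤ 0 :=
    fun x => le_of_max_le_left (le_of_eq (heq x))
  have hgle : ∀ x, ‖fderiv ℝ u x‖ ≤ 1 := by
    intro x
    have h := le_of_max_le_right (le_of_eq (heq x))
    rw [norm_gradient_eq u x] at h
    linarith
  have heqn : ∀ x, ‖fderiv ℝ u x‖ < 1 → δ * u x = lap u x + f x := by
    intro x hx
    have hmax := heq x
    rcases max_choice (δ * u x - lap u x - f x) (‖gradient u x‖ - 1) with h | h
    · rw [h] at hmax; linarith
    · rw [h] at hmax
      rw [norm_gradient_eq u x] at hmax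
      linarith
  have hLip := lip_of_grad u hu hgle
  obtain ⟨Mu, hMu⟩ := bounded_below u hucont hgrow
  obtain ⟨Mf, hMf⟩ := f_bounded_below δ hδ u f hu hfcont hfconv Mu hMu hLip hle1
  refine convexOn_of_midpoint u hucont ?_
  intro x y
  exact limit_step δ Mf (u ((2:ℝ)⁻¹ • (x + y))) ((u x + u y)/2) hδ
    (fun ε h0 h1 => eps_ineq δ hδ u f hu hfconv hgrow hLip hle1 heqn hgle Mf hMf ε h0 h1 x y)
end

section
/- Let Ω ⊂ ℝⁿ be a nonempty bounded set and u : ℝⁿ → ℝ a convex function which is Lipschitz with constant 1 and satisfies u(x) = min_{y ∈ cl(Ω)} { u(y) + |x − y| } for all x ∈ ℝⁿ. Then for all x with |x| > C, where C bounds cl(Ω), and all z with |z| small, the second difference satisfies u(x+z) − 2u(x) + u(x−z) ≤ |z|²/(|x| − C) + o(|z|²) as |z| → 0. -/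
lemma key_norm_ineq {n : ℕ} (a z : EuclideanSpace ℝ (Fin n)) (ha : a ≠ 0) :
    ‖a + z‖ + ‖a - z‖ ≤ 2 * ‖a‖ + ‖z‖ ^ 2 / ‖a‖ := by
  have hs : 0 < ‖a‖ := norm_pos_iff.mpr ha
  have h1 : ‖a + z‖ ^ 2 + ‖a - z‖ ^ 2 = 2 * (‖a‖ ^ 2 + ‖z‖ ^ 2) := by
    rw [← real_inner_self_eq_norm_sq, ← real_inner_self_eq_norm_sq,
      ← real_inner_self_eq_norm_sq, ← real_inner_self_eq_norm_sq]
    simp only [inner_add_add_self, inner_sub_sub_self]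
    ring
  have key2 : ‖a‖ * (‖a + z‖ + ‖a - z‖) ≤ 2 * ‖a‖ ^ 2 + ‖z‖ ^ 2 := by
    nlinarith [sq_nonneg (‖a + z‖ - ‖a - z‖), norm_nonneg (a + z), norm_nonneg (a - z),
      sq_nonneg ‖z‖, sq_nonneg (‖a‖ * (‖a + z‖ + ‖a - z‖) + 2 * ‖a‖ ^ 2 + ‖z‖ ^ 2),
      mul_pos hs hs]
  have : ‖a + z‖ + ‖a - z‖ ≤ (2 * ‖a‖ ^ 2 + ‖z‖ ^ 2) / ‖a‖ := by
    rw [le_div_iff₀ hs]; linarith [key2]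
  have heq : (2 * ‖a‖ ^ 2 + ‖z‖ ^ 2) / ‖a‖ = 2 * ‖a‖ + ‖z‖ ^ 2 / ‖a‖ := by
    field_simp
  linarith [this, heq.le, heq.ge]

theorem stmt8 {n : ℕ} (Ω : Set (EuclideanSpace ℝ (Fin n)))
    (hΩne : Ω.Nonempty) (hΩb : Bornology.IsBounded Ω)
    (u : EuclideanSpace ℝ (Fin n) → ℝ)
    (hconv : ConvexOn ℝ Set.univ u) (hlip : LipschitzWith 1 u)
    (hrep : ∀ x, IsLeast {r : ℝ | ∃ y ∈ closure Ω, r = u y + ‖x - y‖} (u x))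
    (C : ℝ) (hC : ∀ y ∈ closure Ω, ‖y‖ ≤ C) :
    ∀ x : EuclideanSpace ℝ (Fin n), C < ‖x‖ → ∀ ε > (0:ℝ), ∃ r > (0:ℝ),
      ∀ z : EuclideanSpace ℝ (Fin n), ‖z‖ < r →
        u (x + z) - 2 * u x + u (x - z) ≤ ‖z‖ ^ 2 / (‖x‖ - C) + ε * ‖z‖ ^ 2 := by
  intro x hx ε hε
  obtain ⟨⟨y, hy, hxy⟩, _⟩ := hrep x
  refine ⟨1, one_pos, fun z _ => ?_⟩
  have hyC : ‖y‖ ≤ C := hC y hy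
  have hxyn : ‖x‖ - C ≤ ‖x - y‖ := by
    have := norm_sub_norm_le x y; linarith
  have hpos : 0 < ‖x‖ - C := by linarith
  have ha : x - y ≠ 0 := norm_pos_iff.mp (lt_of_lt_of_le hpos hxyn)
  have h1 : u (x + z) ≤ u y + ‖x + z - y‖ := (hrep (x + z)).2 ⟨y, hy, rfl⟩
  have h2 : u (x - z) ≤ u y + ‖x - z - y‖ := (hrep (x - z)).2 ⟨y, hy, rfl⟩
  have e1 : x + z - y = (x - y) + z := by abel
  have e2 : x - z - y = (x - y) - z := by abel
  rw [e1] at h1; rw [e2] at h2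
  have hk := key_norm_ineq (x - y) z ha
  have hdiv : ‖z‖ ^ 2 / ‖x - y‖ ≤ ‖z‖ ^ 2 / (‖x‖ - C) := by
    gcongr
  have hnn : 0 ≤ ε * ‖z‖ ^ 2 := mul_nonneg hε.le (sq_nonneg _)
  linarith [h1, h2, hk, hdiv, hnn, hxy]
end

section
/- Let φ : (0,∞) → ℝ be C¹ with locally Lipschitz derivative, nondecreasing and convex, and suppose there exist r₀ > 0 and δ > 0 with: φ'(r) = 1 for r ≥ r₀; φ satisfies δφ(r) − ((n−1)/r)φ'(r) − φ''(r) − f₀(r) = 0 for 0 < r < r₀ (where φ'' exists); and δφ(r) − ((n−1)/r)φ'(r) − φ''(r) − f₀(r) ≤ 0 for all r > 0 where φ'' exists, with f₀ continuous. If the one-sided second derivative ρ = φ''(r₀−) exists and is nonnegative, then ρ = 0, i.e. φ is twice differentiable at r₀ with φ''(r₀) = 0. -/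
open Filter
open scoped Topology

theorem stmt11 (n : ℕ) (φ f₀ g : ℝ → ℝ) (δ r₀ ρ : ℝ)
    (hδ : 0 < δ) (hr₀ : 0 < r₀)
    (hφc : ContinuousOn φ (Set.Ioi 0))
    (hφ'c : ContinuousOn (deriv φ) (Set.Ioi 0))
    (hf₀c : ContinuousOn f₀ (Set.Ioi 0))
    (hφdiff : ∀ r ∈ Set.Ioi (0:ℝ), DifferentiableAt ℝ φ r)
    (hmono : MonotoneOn φ (Set.Ioi 0))
    (hconv : ConvexOn ℝ (Set.Ioi 0) φ)
    (hφ'1 : ∀ r ≥ r₀, deriv φ r = 1)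
    (hg : ∀ r ∈ Set.Ioo 0 r₀, HasDerivAt (deriv φ) (g r) r)
    (heq : ∀ r ∈ Set.Ioo 0 r₀,
      δ * φ r - ((n - 1 : ℝ) / r) * deriv φ r - g r - f₀ r = 0)
    (hineq : ∀ r > r₀, δ * φ r - ((n - 1 : ℝ) / r) * deriv φ r - f₀ r ≤ 0)
    (hρ : Tendsto g (nhdsWithin r₀ (Set.Iio r₀)) (nhds ρ))
    (hρ0 : 0 ≤ ρ) :
    ρ = 0 := by
  set F : ℝ → ℝ := fun r => δ * φ r - ((n - 1 : ℝ) / r) * deriv φ r - f₀ r with hF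
  have hFc : ContinuousOn F (Set.Ioi 0) := by
    apply ContinuousOn.sub _ hf₀c
    apply ContinuousOn.sub (continuousOn_const.mul hφc)
    exact (continuousOn_const.div continuousOn_id (fun x hx => ne_of_gt hx)).mul hφ'c
  have hr₀mem : r₀ ∈ Set.Ioi (0:ℝ) := hr₀
  -- Left limit: F tends to F r₀ along 𝓝[<] r₀
  have hFleft : Tendsto F (𝓝[<] r₀) (𝓝 (F r₀)) := by
    have h1 : Tendsto F (𝓝[Set.Ioi 0] r₀) (𝓝 (F r₀)) := hFc r₀ hr₀mem
    have h2 : Tendsto F (𝓝[Set.Ioo 0 r₀] r₀) (𝓝 (F r₀)) :=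
      h1.mono_left (nhdsWithin_mono _ (fun x hx => hx.1))
    rwa [nhdsWithin_Ioo_eq_nhdsLT hr₀] at h2
  -- g = F eventually on the left
  have hgF : g =ᶠ[𝓝[<] r₀] F := by
    filter_upwards [Ioo_mem_nhdsLT_of_mem ⟨hr₀, le_refl r₀⟩] with x hx
    have := heq x hx
    simp [hF]; linarith
  have hgleft : Tendsto g (𝓝[<] r₀) (𝓝 (F r₀)) := hFleft.congr' hgF.symm
  have hρF : ρ = F r₀ := tendsto_nhds_unique hρ hgleft
  -- Right limit: F r₀ ≤ 0
  have hFright : Tendsto F (𝓝[>] r₀) (𝓝 (F r₀)) := by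
    have h1 : Tendsto F (𝓝[Set.Ioi 0] r₀) (𝓝 (F r₀)) := hFc r₀ hr₀mem
    exact h1.mono_left (nhdsWithin_mono _ (fun x hx => lt_trans hr₀ hx))
  have hFle : F r₀ ≤ 0 := by
    refine le_of_tendsto hFright ?_
    filter_upwards [self_mem_nhdsWithin] with x hx
    exact hineq x hx
  linarith
end

section
/- Define λ_− = sup over φ ∈ C²(ℝⁿ) with |Dφ| ≤ 1 of inf_{x ∈ ℝⁿ}(Δφ(x) + f(x)), and define λ* by formula (maxform): λ* is the supremum of λ such that max{λ − Δu − f, |Du| − 1} = 0 admits a viscosity subsolution u with limsup u(x)/|x| ≤ 1. Assume λ* admits a convex C^{1,1} solution u* with |Du*| ≤ 1 and 0 ≤ D²u* ≤ L, and f is convex and superlinear. Then λ_− = λ*. -/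
open Filter MeasureTheory
open scoped InnerProductSpace Topology

open Filter MeasureTheory Metric intervalIntegral
set_option linter.unusedSectionVars false
set_option synthInstance.maxHeartbeats 1000000
set_option maxHeartbeats 2000000

lemma my_integral_id_mul (C h : ℝ) : (∫ t in (0:ℝ)..h, C * t) = C / 2 * h ^ 2 := by
  rw [intervalIntegral.integral_const_mul, integral_id]; ring

/-- FTC identity for the symmetric second difference. -/
lemma secondDiff_eq_integral {g G : ℝ → ℝ} (hg : ∀ t, HasDerivAt g (G t) t)
    (hGc : Continuous G) (h : ℝ) :
    g h + g (-h) - 2 * g 0 = ∫ s in (0:ℝ)..h, (G s - G (-s)) := by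
  have hGc' : Continuous fun s : ℝ => G (-s) := hGc.comp continuous_neg
  have h1 : (∫ s in (0:ℝ)..h, G s) = g h - g 0 :=
    integral_eq_sub_of_hasDerivAt (fun x _ => hg x) (hGc.intervalIntegrable _ _)
  have h2 : (∫ s in (0:ℝ)..h, G (-s)) = -g (-h) - -g 0 := by
    have h2' := integral_eq_sub_of_hasDerivAt (f := fun s => -g (-s)) (a := 0) (b := h)
      (f' := fun s => G (-s)) (fun x _ => by
        simpa [Function.comp_def, Pi.neg_def] using ((hg (-x)).comp x (hasDerivAt_neg x)).neg)
      (hGc'.intervalIntegrable _ _)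
    simpa using h2'
  rw [intervalIntegral.integral_sub (hGc.intervalIntegrable _ _)
    (hGc'.intervalIntegrable _ _), h1, h2]
  ring

/-- Quantitative bound on the symmetric second difference. -/
lemma secondDiff_bound {g G : ℝ → ℝ} (hg : ∀ t, HasDerivAt g (G t) t)
    (hGc : Continuous G) {C h : ℝ} (hC : 0 ≤ C)
    (hlip : ∀ s, 0 ≤ s → |G s - G (-s)| ≤ C * s) (hh : 0 < h) :
    |g h + g (-h) - 2 * g 0| ≤ C / 2 * h ^ 2 := by
  rw [secondDiff_eq_integral hg hGc h]
  have hb : ∀ᵐ t ∂(volume.restrict (Set.uIoc (0:ℝ) h)), ‖G t - G (-t)‖ ≤ C * t := by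
    rw [Set.uIoc_of_le hh.le]
    exact (ae_restrict_iff' measurableSet_Ioc).2 (ae_of_all _ fun s hs => hlip s hs.1.le)
  have hCt : Continuous fun t : ℝ => C * t := continuous_const.mul continuous_id'
  have := intervalIntegral.norm_integral_le_abs_of_norm_le hb
    (hCt.intervalIntegrable (μ := volume) 0 h)
  rw [my_integral_id_mul] at this
  calc |∫ s in (0:ℝ)..h, (G s - G (-s))| ≤ |C / 2 * h ^ 2| := this
    _ = C / 2 * h ^ 2 := abs_of_nonneg (by positivity)

/-- Convergence of the symmetric second difference quotient to the second derivative. -/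
lemma secondDiff_tendsto {g G : ℝ → ℝ} (hg : ∀ t, HasDerivAt g (G t) t)
    (hGc : Continuous G) {D : ℝ} (hG0 : HasDerivAt G D 0) :
    Tendsto (fun h => (g h + g (-h) - 2 * g 0) / h ^ 2) (nhdsWithin 0 (Set.Ioi 0)) (nhds D) := by
  rw [Metric.tendsto_nhdsWithin_nhds]
  intro ε hε
  have hlo := hG0.isLittleO
  rw [Asymptotics.isLittleO_iff] at hlo
  have h4 : (0:ℝ) < ε/4 := by linarith
  obtain ⟨δ, hδ, hball⟩ := Metric.eventually_nhds_iff.1 (hlo h4)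
  refine ⟨δ, hδ, ?_⟩
  intro h hmem hdist
  have hh : (0:ℝ) < h := hmem
  have hh2 : (0:ℝ) < h ^ 2 := by positivity
  have hhδ : h < δ := by
    rwa [Real.dist_eq, sub_zero, abs_of_pos hh] at hdist
  have hGc' : Continuous fun s : ℝ => G (-s) := hGc.comp continuous_neg
  have hDt : Continuous fun t : ℝ => 2 * D * t := continuous_const.mul continuous_id'
  -- key estimate
  have key : |g h + g (-h) - 2 * g 0 - h ^ 2 * D| ≤ ε/2 * h ^ 2 := by
    have hint : g h + g (-h) - 2 * g 0 - h ^ 2 * D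
        = ∫ s in (0:ℝ)..h, (G s - G (-s) - 2 * D * s) := by
      rw [intervalIntegral.integral_sub (show IntervalIntegrable (fun s => G s - G (-s)) volume 0 h from
          (hGc.sub hGc').intervalIntegrable 0 h)
        (hDt.intervalIntegrable _ _), my_integral_id_mul,
        ← secondDiff_eq_integral hg hGc h]
      ring
    have hb : ∀ᵐ t ∂(volume.restrict (Set.uIoc (0:ℝ) h)),
        ‖G t - G (-t) - 2 * D * t‖ ≤ ε/2 * t := by
      rw [Set.uIoc_of_le hh.le]
      refine (ae_restrict_iff' measurableSet_Ioc).2 (ae_of_all _ fun s hs => ?_)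
      have hs0 : 0 < s := hs.1
      have hsδ : dist s 0 < δ := by
        rw [Real.dist_eq, sub_zero, abs_of_pos hs0]; exact lt_of_le_of_lt hs.2 hhδ
      have hsδ' : dist (-s) 0 < δ := by
        rw [Real.dist_eq, sub_zero, abs_neg, abs_of_pos hs0]; exact lt_of_le_of_lt hs.2 hhδ
      have h1 := hball hsδ
      have h2 := hball hsδ'
      simp only [sub_zero, ContinuousLinearMap.smulRight_apply, ContinuousLinearMap.one_apply,
        smul_eq_mul, Real.norm_eq_abs] at h1 h2 ⊢
      have heq : G s - G (-s) - 2 * D * s = (G s - G 0 - s * D) - (G (-s) - G 0 - (-s) * D) := by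
        ring
      rw [heq]
      calc |(G s - G 0 - s * D) - (G (-s) - G 0 - (-s) * D)|
          ≤ |G s - G 0 - s * D| + |G (-s) - G 0 - (-s) * D| := abs_sub _ _
        _ ≤ ε/4 * |s| + ε/4 * |(-s)| := add_le_add h1 h2
        _ = ε/2 * s := by rw [abs_neg, abs_of_pos hs0]; ring
    have hεt : Continuous fun t : ℝ => ε/2 * t := continuous_const.mul continuous_id'
    have hmain := intervalIntegral.norm_integral_le_abs_of_norm_le hb
      (hεt.intervalIntegrable (μ := volume) 0 h)
    rw [my_integral_id_mul] at hmain
    rw [hint]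
    refine hmain.trans ?_
    rw [abs_of_nonneg (by positivity : (0:ℝ) ≤ ε/2/2*h^2)]
    nlinarith
  rw [Real.dist_eq]
  have e1 : (g h + g (-h) - 2 * g 0) / h ^ 2 - D
      = (g h + g (-h) - 2 * g 0 - h ^ 2 * D) / h ^ 2 := by field_simp
  rw [e1, abs_div, abs_of_pos hh2, div_lt_iff₀ hh2]
  nlinarith

open scoped RealInnerProductSpace

variable {F : Type*} [NormedAddCommGroup F] [InnerProductSpace ℝ F] [CompleteSpace F]

lemma line_hasDerivAt (x v : F) (t : ℝ) : HasDerivAt (fun t : ℝ => x + t • v) v t := by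
  simpa using ((hasDerivAt_id t).smul_const v).const_add x

lemma line_continuous (x v : F) : Continuous (fun t : ℝ => x + t • v) :=
  continuous_const.add (continuous_id.smul continuous_const)

/-- Second difference quotient of a `C²` function converges to the diagonal Hessian entry. -/
lemma contDiff_secondDiff_tendsto {φ : F → ℝ} (hφ : ContDiff ℝ 2 φ) (x v : F) :
    Tendsto (fun h => (φ (x + h • v) + φ (x - h • v) - 2 * φ x) / h ^ 2)
      (nhdsWithin 0 (Set.Ioi 0)) (nhds (fderiv ℝ (fun y => fderiv ℝ φ y v) x v)) := by
  set F' : F → ℝ := fun y => fderiv ℝ φ y v with hF'def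
  have hF : ContDiff ℝ 1 F' :=
    (hφ.fderiv_right (by norm_num)).clm_apply contDiff_const
  set g : ℝ → ℝ := fun t => φ (x + t • v) with hgdef
  set G : ℝ → ℝ := fun t => F' (x + t • v) with hGdef
  have hg : ∀ t, HasDerivAt g (G t) t := fun t => by
    simpa [Function.comp_def] using
      (((hφ.differentiable (by norm_num)) (x + t • v)).hasFDerivAt).comp_hasDerivAt t
        (line_hasDerivAt x v t)
  have hGc : Continuous G := hF.continuous.comp (line_continuous x v)
  have hG0 : HasDerivAt G (fderiv ℝ F' x v) 0 := by
    have key : HasDerivAt (fun t : ℝ => F' (x + t • v)) (fderiv ℝ F' (x + (0:ℝ) • v) v) 0 :=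
      (((hF.differentiable (by norm_num)) (x + (0:ℝ) • v)).hasFDerivAt.comp_hasDerivAt 0
        (line_hasDerivAt x v 0) : HasDerivAt (F' ∘ fun t : ℝ => x + t • v) _ 0)
    simpa using key
  have := secondDiff_tendsto hg hGc hG0
  refine this.congr fun h => ?_
  simp only [hgdef]
  rw [neg_smul, ← sub_eq_add_neg, zero_smul, add_zero]

/-- At a differentiability point of the gradient, the second difference quotient converges. -/
lemma grad_secondDiff_tendsto {u : F → ℝ} {Du : F → F}
    (hgrad : ∀ z, HasGradientAt u (Du z) z) (hDuc : Continuous Du)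
    {w : F} (v : F) (hdiff : DifferentiableAt ℝ Du w) :
    Tendsto (fun h => (u (w + h • v) + u (w - h • v) - 2 * u w) / h ^ 2)
      (nhdsWithin 0 (Set.Ioi 0)) (nhds ⟪fderiv ℝ Du w v, v⟫) := by
  set g : ℝ → ℝ := fun t => u (w + t • v) with hgdef
  set G : ℝ → ℝ := fun t => ⟪v, Du (w + t • v)⟫ with hGdef
  have hg : ∀ t, HasDerivAt g (G t) t := fun t => by
    have := ((hgrad (w + t • v)).hasFDerivAt).comp_hasDerivAt t (line_hasDerivAt w v t)
    simpa [Function.comp_def, InnerProductSpace.toDual_apply_apply, real_inner_comm] using this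
  have hGc : Continuous G :=
    continuous_const.inner (hDuc.comp (line_continuous w v))
  have hG0 : HasDerivAt G ⟪v, fderiv ℝ Du w v⟫ 0 := by
    have hd0 : DifferentiableAt ℝ Du (w + (0:ℝ) • v) := by simpa using hdiff
    have hΦ : HasFDerivAt (fun z => (innerSL ℝ v) (Du z))
        ((innerSL ℝ v).comp (fderiv ℝ Du (w + (0:ℝ) • v))) (w + (0:ℝ) • v) :=
      (innerSL ℝ v).hasFDerivAt.comp _ hd0.hasFDerivAt
    have key := hΦ.comp_hasDerivAt 0 (line_hasDerivAt w v 0)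
    simpa [Function.comp_def] using key
  have := secondDiff_tendsto hg hGc hG0
  rw [real_inner_comm]
  refine this.congr fun h => ?_
  simp only [hgdef]
  rw [neg_smul, ← sub_eq_add_neg, zero_smul, add_zero]

/-- Uniform bound on second difference quotients from the Lipschitz gradient. -/
lemma grad_secondDiff_bound {u : F → ℝ} {Du : F → F} {K : NNReal}
    (hgrad : ∀ z, HasGradientAt u (Du z) z) (hDulip : LipschitzWith K Du)
    (w v : F) (hv : ‖v‖ ≤ 1) {h : ℝ} (hh : 0 < h) :
    |u (w + h • v) + u (w - h • v) - 2 * u w| ≤ (K:ℝ) * h ^ 2 := by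
  set g : ℝ → ℝ := fun t => u (w + t • v) with hgdef
  set G : ℝ → ℝ := fun t => ⟪v, Du (w + t • v)⟫ with hGdef
  have hg : ∀ t, HasDerivAt g (G t) t := fun t => by
    have := ((hgrad (w + t • v)).hasFDerivAt).comp_hasDerivAt t (line_hasDerivAt w v t)
    simpa [Function.comp_def, InnerProductSpace.toDual_apply_apply, real_inner_comm] using this
  have hGc : Continuous G :=
    continuous_const.inner (hDulip.continuous.comp (line_continuous w v))
  have hlip : ∀ s, 0 ≤ s → |G s - G (-s)| ≤ (2 * K) * s := by
    intro s hs
    have h1 : G s - G (-s) = ⟪v, Du (w + s • v) - Du (w + (-s) • v)⟫ := by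
      simp [hGdef, inner_sub_right]
    have hvec : (w + s • v) - (w + (-s) • v) = (2 * s) • v := by module
    rw [h1]
    calc |⟪v, Du (w + s • v) - Du (w + (-s) • v)⟫|
        ≤ ‖v‖ * ‖Du (w + s • v) - Du (w + (-s) • v)‖ := abs_real_inner_le_norm _ _
      _ ≤ 1 * ((K:ℝ) * ‖(w + s • v) - (w + (-s) • v)‖) := by
          refine mul_le_mul hv ?_ (norm_nonneg _) zero_le_one
          have := hDulip.dist_le_mul (w + s • v) (w + (-s) • v)
          simpa [dist_eq_norm] using this
      _ = (K:ℝ) * ‖(2 * s) • v‖ := by rw [one_mul, hvec]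
      _ ≤ (2 * K) * s := by
          rw [norm_smul, Real.norm_eq_abs, abs_of_nonneg (by linarith : (0:ℝ) ≤ 2 * s)]
          have hm := mul_le_mul_of_nonneg_left hv (by positivity : (0:ℝ) ≤ (K:ℝ) * (2 * s))
          nlinarith [hm]
  have hb := secondDiff_bound hg hGc (by positivity : (0:ℝ) ≤ 2 * K) hlip hh
  have heq : u (w + h • v) + u (w - h • v) - 2 * u w = g h + g (-h) - 2 * g 0 := by
    simp only [hgdef]
    rw [neg_smul, ← sub_eq_add_neg, zero_smul, add_zero]
  rw [heq]
  exact hb.trans_eq (by ring)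

open scoped InnerProductSpace

section Aux
variable {n : ℕ}
local notation "E" => EuclideanSpace ℝ (Fin n)

lemma sum_quad_smul (X : Matrix (Fin n) (Fin n) ℝ) (v : E) (t : ℝ) :
    ∑ i, ∑ j, X i j * (t • v) i * (t • v) j
      = t ^ 2 * ∑ i, ∑ j, X i j * v i * v j := by
  rw [Finset.mul_sum]
  refine Finset.sum_congr rfl fun i _ => ?_
  rw [Finset.mul_sum]
  refine Finset.sum_congr rfl fun j _ => ?_
  simp only [PiLp.smul_apply, smul_eq_mul]
  ring

lemma sum_quad_neg (X : Matrix (Fin n) (Fin n) ℝ) (v : E) :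
    ∑ i, ∑ j, X i j * (-v) i * (-v) j = ∑ i, ∑ j, X i j * v i * v j := by
  refine Finset.sum_congr rfl fun i _ => Finset.sum_congr rfl fun j _ => ?_
  simp only [PiLp.neg_apply]
  ring

lemma sum_quad_single (X : Matrix (Fin n) (Fin n) ℝ) (i : Fin n) :
    ∑ j, ∑ k, X j k * (EuclideanSpace.single i (1:ℝ)) j
      * (EuclideanSpace.single i (1:ℝ)) k = X i i := by
  simp [EuclideanSpace.single_apply, Finset.mul_sum, mul_ite, ite_mul]

/-- Limsup at infinity of a 1-Lipschitz function divided by the norm. -/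
lemma limsup_lipschitz_le {ψ : E → ℝ} (hψ : LipschitzWith 1 ψ) :
    limsup (fun x => ψ x / ‖x‖) (cocompact E) ≤ 1 := by
  rw [Filter.limsup_eq]
  by_cases hbd : BddBelow {a | ∀ᶠ x in cocompact E, ψ x / ‖x‖ ≤ a}
  · have hmem : ∀ ε : ℝ, 0 < ε → sInf {a | ∀ᶠ x in cocompact E, ψ x / ‖x‖ ≤ a} ≤ 1 + ε := by
      intro ε hε
      refine csInf_le hbd ?_
      have hev : ∀ᶠ x in cocompact E, max 1 (|ψ 0| / ε) ≤ ‖x‖ :=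
        (tendsto_norm_cocompact_atTop).eventually_ge_atTop _
      filter_upwards [hev] with x hx
      have h1 : (1:ℝ) ≤ ‖x‖ := le_trans (le_max_left _ _) hx
      have hpos : (0:ℝ) < ‖x‖ := lt_of_lt_of_le one_pos h1
      have h2 : |ψ 0| / ε ≤ ‖x‖ := le_trans (le_max_right _ _) hx
      have hψx : ψ x ≤ ψ 0 + ‖x‖ := by
        have := hψ.dist_le_mul x 0
        rw [dist_zero_right] at this
        have h3 : |ψ x - ψ 0| ≤ ‖x‖ := by
          simpa [Real.dist_eq] using this
        have := abs_le.1 h3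
        linarith [this.2]
      rw [div_le_iff₀ hpos]
      have h4 : |ψ 0| ≤ ε * ‖x‖ := by
        rw [div_le_iff₀ hε] at h2
        nlinarith
      nlinarith [neg_abs_le (ψ 0), le_abs_self (ψ 0)]
    by_contra hcon
    push_neg at hcon
    have := hmem ((sInf {a | ∀ᶠ x in cocompact E, ψ x / ‖x‖ ≤ a} - 1)/2) (by linarith)
    linarith
  · rw [Real.sInf_of_not_bddBelow hbd]
    norm_num

end Aux

section Superjet
variable {n : ℕ}
local notation "E" => EuclideanSpace ℝ (Fin n)

lemma line_tendsto_within (x₀ v : E) :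
    Tendsto (fun t : ℝ => x₀ + t • v) (nhdsWithin 0 (Set.Ioi 0)) (nhds x₀) := by
  have h := (line_continuous x₀ v).tendsto 0
  simp only [zero_smul, add_zero] at h
  exact h.mono_left nhdsWithin_le_nhds

lemma directional_deriv_tendsto {φ : E → ℝ} (hd : Differentiable ℝ φ) (x₀ v : E) :
    Tendsto (fun t : ℝ => (φ (x₀ + t • v) - φ x₀) / t) (nhdsWithin 0 (Set.Ioi 0))
      (nhds ⟪gradient φ x₀, v⟫_ℝ) := by
  have hgx : HasGradientAt φ (gradient φ x₀) x₀ := (hd x₀).hasGradientAt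
  have h1 : HasDerivAt (fun t : ℝ => φ (x₀ + t • v)) (fderiv ℝ φ (x₀ + (0:ℝ) • v) v) 0 := by
    simpa [Function.comp_def] using
      ((hd (x₀ + (0:ℝ) • v)).hasFDerivAt).comp_hasDerivAt 0 (line_hasDerivAt x₀ v 0)
  have h2 : fderiv ℝ φ (x₀ + (0:ℝ) • v) v = ⟪gradient φ x₀, v⟫_ℝ := by
    rw [show x₀ + (0:ℝ) • v = x₀ by simp, hgx.hasFDerivAt.fderiv]
    simp [InnerProductSpace.toDual_apply_apply]
  rw [h2] at h1
  have h3 := hasDerivAt_iff_tendsto_slope.1 h1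
  have h4 := h3.mono_left (nhdsWithin_mono 0 (fun t (ht : t ∈ Set.Ioi 0) => ne_of_gt ht))
  refine h4.congr fun t => ?_
  simp [slope_def_field]

lemma superjet_facts {φ : E → ℝ} (hφ : ContDiff ℝ 2 φ) {x₀ p : E}
    {X : Matrix (Fin n) (Fin n) ℝ} (hsj : InSuperjet φ x₀ p X) :
    p = gradient φ x₀ ∧ lap φ x₀ ≤ X.trace := by
  have hd : Differentiable ℝ φ := hφ.differentiable (by norm_num)
  -- eventual inequality along a ray
  have ray : ∀ (c : ℝ), 0 < c → ∀ v : E, ∀ᶠ t in nhdsWithin (0:ℝ) (Set.Ioi 0),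
      φ (x₀ + t • v) - φ x₀ ≤ t * ⟪p, v⟫_ℝ
        + t ^ 2 * ((1/2) * (∑ i, ∑ j, X i j * v i * v j) + c * ‖v‖ ^ 2) := by
    intro c hc v
    have hev := (line_tendsto_within x₀ v).eventually (hsj c hc)
    filter_upwards [hev] with t ht
    rw [add_sub_cancel_left] at ht
    rw [real_inner_smul_right, sum_quad_smul, norm_smul] at ht
    have habs : ‖t‖ ^ 2 = t ^ 2 := by rw [Real.norm_eq_abs, sq_abs]
    rw [mul_pow, habs] at ht
    linarith
  constructor
  · -- gradient identification
    have key : ∀ v : E, ⟪gradient φ x₀ - p, v⟫_ℝ ≤ 0 := by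
      intro v
      have hquot : ∀ᶠ t in nhdsWithin (0:ℝ) (Set.Ioi 0),
          (φ (x₀ + t • v) - φ x₀) / t ≤ ⟪p, v⟫_ℝ
            + t * ((1/2) * (∑ i, ∑ j, X i j * v i * v j) + 1 * ‖v‖ ^ 2) := by
        filter_upwards [ray 1 one_pos v, self_mem_nhdsWithin] with t ht (htpos : t ∈ Set.Ioi 0)
        rw [div_le_iff₀ htpos]
        nlinarith [htpos.out]
      have hlim2 : Tendsto (fun t : ℝ => ⟪p, v⟫_ℝ
          + t * ((1/2) * (∑ i, ∑ j, X i j * v i * v j) + 1 * ‖v‖ ^ 2))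
          (nhdsWithin 0 (Set.Ioi 0)) (nhds ⟪p, v⟫_ℝ) := by
        have : Continuous (fun t : ℝ => ⟪p, v⟫_ℝ
            + t * ((1/2) * (∑ i, ∑ j, X i j * v i * v j) + 1 * ‖v‖ ^ 2)) := by continuity
        have h := this.tendsto 0
        simp only [zero_mul, add_zero] at h
        exact h.mono_left nhdsWithin_le_nhds
      have := le_of_tendsto_of_tendsto (directional_deriv_tendsto hd x₀ v) hlim2 hquot
      rw [inner_sub_left]
      linarith
    have h1 := key (gradient φ x₀ - p)
    have h2 : (0:ℝ) ≤ ⟪gradient φ x₀ - p, gradient φ x₀ - p⟫_ℝ := real_inner_self_nonneg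
    have h3 : ⟪gradient φ x₀ - p, gradient φ x₀ - p⟫_ℝ = 0 := le_antisymm h1 h2
    have h4 : gradient φ x₀ - p = 0 := by
      exact inner_self_eq_zero.1 h3
    rw [sub_eq_zero] at h4
    exact h4.symm
  · -- trace bound
    have hterm : ∀ i : Fin n,
        fderiv ℝ (fun y => fderiv ℝ φ y (EuclideanSpace.single i (1:ℝ))) x₀
          (EuclideanSpace.single i (1:ℝ)) ≤ X i i := by
      intro i
      set e : E := EuclideanSpace.single i (1:ℝ) with he
      have hnorm : ‖e‖ = 1 := by
        rw [he, EuclideanSpace.norm_single, norm_one]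
      refine le_of_forall_pos_le_add ?_
      intro ε hε
      have hc : (0:ℝ) < ε / 4 := by linarith
      have hquot : ∀ᶠ t in nhdsWithin (0:ℝ) (Set.Ioi 0),
          (φ (x₀ + t • e) + φ (x₀ - t • e) - 2 * φ x₀) / t ^ 2 ≤ X i i + ε / 2 := by
        filter_upwards [ray (ε/4) hc e, ray (ε/4) hc (-e), self_mem_nhdsWithin]
          with t h1 h2 (htpos : t ∈ Set.Ioi 0)
        have ht0 : (0:ℝ) < t := htpos
        have ht2 : (0:ℝ) < t ^ 2 := by positivity
        rw [sum_quad_neg, inner_neg_right, norm_neg, hnorm] at h2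
        have h2' : φ (x₀ - t • e) - φ x₀ ≤ t * (-⟪p, e⟫_ℝ)
            + t ^ 2 * ((1/2) * (∑ i, ∑ j, X i j * e i * e j) + (ε/4) * 1 ^ 2) := by
          have : x₀ + t • (-e) = x₀ - t • e := by module
          rwa [this] at h2
        rw [hnorm] at h1
        rw [div_le_iff₀ ht2]
        have hsum := sum_quad_single X i
        rw [← he] at hsum
        nlinarith [h1, h2']
      have hlim := contDiff_secondDiff_tendsto hφ x₀ e
      have := le_of_tendsto hlim hquot
      linarith
    calc lap φ x₀ ≤ ∑ i, X i i := Finset.sum_le_sum fun i _ => hterm i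
      _ = X.trace := by simp [Matrix.trace, Matrix.diag]

end Superjet

section Mollify
variable {n : ℕ}
local notation "E" => EuclideanSpace ℝ (Fin n)

lemma mollified_subsolution (f : E → ℝ) (L lamStar : ℝ) (hL : 0 ≤ L)
    (hfconv : ConvexOn ℝ Set.univ f)
    (hfsuper : Tendsto (fun x : E => f x / ‖x‖) (cocompact E) atTop)
    (ustar : E → ℝ) (Du : E → E)
    (hgrad : ∀ x, HasGradientAt ustar (Du x) x)
    (hDulip : LipschitzWith L.toNNReal Du)
    (hDu1 : ∀ x, ‖Du x‖ ≤ 1)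
    (hsol : ∀ᵐ x : E ∂volume, DifferentiableAt ℝ Du x ∧
      (∀ ξ : E, 0 ≤ ⟪fderiv ℝ Du x ξ, ξ⟫_ℝ ∧ ⟪fderiv ℝ Du x ξ, ξ⟫_ℝ ≤ L * ‖ξ‖ ^ 2) ∧
      max (lamStar - (∑ i, ⟪fderiv ℝ Du x (EuclideanSpace.single i (1:ℝ)),
        EuclideanSpace.single i (1:ℝ)⟫_ℝ) - f x) (‖Du x‖ - 1) = 0)
    {ε : ℝ} (hε : 0 < ε) :
    ∃ φ : E → ℝ, ContDiff ℝ 2 φ ∧ (∀ x, ‖gradient φ x‖ ≤ 1) ∧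
      ∀ x, lamStar - ε ≤ lap φ x + f x := by
  classical
  -- continuity of f
  have hfc : Continuous f := by
    rw [← continuousOn_univ]
    exact ConvexOn.continuousOn isOpen_univ hfconv
  have hudiff : Differentiable ℝ ustar := fun x => (hgrad x).differentiableAt
  have hu_cont : Continuous ustar := hudiff.continuous
  have hDuc : Continuous Du := hDulip.continuous
  -- superlinearity: big radius
  obtain ⟨R₁, hR₁one, hR₁⟩ : ∃ R₁ : ℝ, 1 ≤ R₁ ∧ ∀ x : E, R₁ ≤ ‖x‖ → lamStar ≤ f x := by
    have hev : ∀ᶠ x in cocompact E, |lamStar| + 1 ≤ f x / ‖x‖ :=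
      hfsuper.eventually_ge_atTop _
    obtain ⟨K, hK, hKsub⟩ := Filter.mem_cocompact.1 hev
    obtain ⟨r, hr⟩ := hK.isBounded.subset_closedBall 0
    refine ⟨max (|r| + 1) 1, le_max_right _ _, fun x hx => ?_⟩
    have hxr : |r| + 1 ≤ ‖x‖ := le_trans (le_max_left _ _) hx
    have hx1 : (1:ℝ) ≤ ‖x‖ := le_trans (le_max_right _ _) hx
    have hxK : x ∉ K := by
      intro hmem
      have := hr hmem
      rw [Metric.mem_closedBall, dist_zero_right] at this
      have : ‖x‖ ≤ |r| := this.trans (le_abs_self r)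
      linarith
    have hfx : |lamStar| + 1 ≤ f x / ‖x‖ := hKsub hxK
    have hpos : (0:ℝ) < ‖x‖ := lt_of_lt_of_le one_pos hx1
    rw [le_div_iff₀ hpos] at hfx
    nlinarith [le_abs_self lamStar, abs_nonneg lamStar]
  -- uniform continuity radius
  have hcomp : IsCompact (Metric.closedBall (0:E) (R₁+2)) := isCompact_closedBall _ _
  have hunif := hcomp.uniformContinuousOn_of_continuous hfc.continuousOn
  rw [Metric.uniformContinuousOn_iff] at hunif
  obtain ⟨δ₀, hδ₀, hδprop⟩ := hunif ε hε
  set δ : ℝ := min δ₀ 1 with hδdef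
  have hδpos : 0 < δ := lt_min hδ₀ one_pos
  have hδ1 : δ ≤ 1 := min_le_right _ _
  have hδδ₀ : δ ≤ δ₀ := min_le_left _ _
  -- the bump function
  set ρb : ContDiffBump (0:E) := ⟨δ/2, δ, by positivity, by linarith⟩ with hρbdef
  set ρ : E → ℝ := ρb.normed volume with hρdef
  have hρ_nonneg : ∀ z, 0 ≤ ρ z := fun z => ρb.nonneg_normed z
  have hρ_int1 : ∫ z, ρ z = 1 := ρb.integral_normed
  have hρ_supp : Function.support ρ = Metric.ball 0 δ := ρb.support_normed_eq
  have hρ_cont : Continuous ρ := ρb.continuous_normed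
  have hρ_cs : HasCompactSupport ρ := ρb.hasCompactSupport_normed
  have hρ_integrable : Integrable ρ volume := ρb.integrable_normed
  -- the mollified function
  set φ : E → ℝ := fun x => ∫ z, ρ z * ustar (x - z) with hφdef
  -- integrability helpers
  have hint_u : ∀ c : E, Integrable (fun z => ρ z * ustar (c - z)) volume := by
    intro c
    refine Continuous.integrable_of_hasCompactSupport
      (hρ_cont.mul (hu_cont.comp (continuous_const.sub continuous_id))) ?_
    exact hρ_cs.mul_right
  have hint_f : ∀ c : E, Integrable (fun z => ρ z * f (c - z)) volume := by
    intro c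
    refine Continuous.integrable_of_hasCompactSupport
      (hρ_cont.mul (hfc.comp (continuous_const.sub continuous_id))) ?_
    exact hρ_cs.mul_right
  have hint_Du : ∀ c : E, Integrable (fun z => ρ z • Du (c - z)) volume := by
    intro c
    refine Continuous.integrable_of_hasCompactSupport
      (hρ_cont.smul (hDuc.comp (continuous_const.sub continuous_id))) ?_
    exact hρ_cs.smul_right
  -- smoothness
  have hφc : ContDiff ℝ 2 φ := by
    have h := HasCompactSupport.contDiff_convolution_left (𝕜 := ℝ)
      (ContinuousLinearMap.lsmul ℝ ℝ) hρ_cs (ρb.contDiff_normed (n := 2))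
      (hu_cont.locallyIntegrable (μ := volume))
    have heq : φ = convolution ρ ustar (ContinuousLinearMap.lsmul ℝ ℝ) volume := by
      funext x
      rw [convolution_def]
      simp [hφdef, ContinuousLinearMap.lsmul_apply, smul_eq_mul]
    rw [heq]
    exact_mod_cast h
  -- gradient identity
  set gv : E → E := fun x => ∫ z, ρ z • Du (x - z) with hgvdef
  set td := InnerProductSpace.toDual ℝ (EuclideanSpace ℝ (Fin n)) with htddef
  have hgradφ : ∀ x, HasGradientAt φ (gv x) x := by
    intro x
    have main := hasFDerivAt_integral_of_dominated_of_fderiv_le (𝕜 := ℝ)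
      (F := fun (x' : E) z => ρ z * ustar (x' - z))
      (F' := fun (x' : E) z => ρ z • (td (Du (x' - z)) : E →L[ℝ] ℝ))
      (x₀ := x) (bound := ρ) (s := Metric.ball x 1) (Metric.ball_mem_nhds x one_pos)
      (Eventually.of_forall fun x' =>
        ((hρ_cont.mul (hu_cont.comp (continuous_const.sub continuous_id)))).aestronglyMeasurable)
      (hint_u x)
      ((hρ_cont.smul (((td : E ≃ₗᵢ⋆[ℝ] _).continuous).comp
        (hDuc.comp (continuous_const.sub continuous_id)))).aestronglyMeasurable)
      (ae_of_all _ fun z x' _ => by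
        show ‖ρ z • (td (Du (x' - z)) : E →L[ℝ] ℝ)‖ ≤ ρ z
        rw [norm_smul, Real.norm_eq_abs, abs_of_nonneg (hρ_nonneg z),
          (td : E ≃ₗᵢ⋆[ℝ] _).norm_map]
        calc ρ z * ‖Du (x' - z)‖ ≤ ρ z * 1 :=
              mul_le_mul_of_nonneg_left (hDu1 _) (hρ_nonneg z)
          _ = ρ z := mul_one _)
      hρ_integrable
      (ae_of_all _ fun z x' _ => by
        have h1 : HasFDerivAt ustar (td (Du (x' - z)) : E →L[ℝ] ℝ) (x' - z) :=
          (hgrad _).hasFDerivAt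
        have h2 : HasFDerivAt (fun y : E => y - z) (ContinuousLinearMap.id ℝ E) x' :=
          (hasFDerivAt_id x').sub_const z
        have h3 := h1.comp x' h2
        rw [ContinuousLinearMap.comp_id] at h3
        exact h3.const_mul (ρ z))
    -- identify the derivative with the dual of gv x
    have hintF' : Integrable (fun z => ρ z • (td (Du (x - z)) : E →L[ℝ] ℝ)) volume := by
      refine Continuous.integrable_of_hasCompactSupport
        (hρ_cont.smul (((td : E ≃ₗᵢ⋆[ℝ] _).continuous).comp
          (hDuc.comp (continuous_const.sub continuous_id)))) ?_
      exact hρ_cs.smul_right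
    have hident : (∫ z, ρ z • (td (Du (x - z)) : E →L[ℝ] ℝ)) = td (gv x) := by
      refine ContinuousLinearMap.ext fun w => ?_
      rw [ContinuousLinearMap.integral_apply hintF']
      have h1 : ∀ z, (ρ z • (td (Du (x - z)) : E →L[ℝ] ℝ)) w
          = ⟪w, ρ z • Du (x - z)⟫_ℝ := by
        intro z
        rw [ContinuousLinearMap.smul_apply, smul_eq_mul, htddef,
          InnerProductSpace.toDual_apply_apply, real_inner_smul_right, real_inner_comm]
      rw [show (fun z => (ρ z • (td (Du (x - z)) : E →L[ℝ] ℝ)) w)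
          = fun z => ⟪w, ρ z • Du (x - z)⟫_ℝ from funext h1]
      rw [integral_inner (hint_Du x) w, htddef, InnerProductSpace.toDual_apply_apply,
        real_inner_comm]
    rw [hident] at main
    exact main
  have hgradval : ∀ x, gradient φ x = gv x := fun x => (hgradφ x).gradient
  have hgv1 : ∀ x, ‖gv x‖ ≤ 1 := by
    intro x
    calc ‖gv x‖ ≤ ∫ z, ‖ρ z • Du (x - z)‖ := norm_integral_le_integral_norm _
      _ ≤ ∫ z, ρ z := by
          refine integral_mono (hint_Du x).norm hρ_integrable fun z => ?_
          rw [norm_smul, Real.norm_eq_abs, abs_of_nonneg (hρ_nonneg z)]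
          calc ρ z * ‖Du (x - z)‖ ≤ ρ z * 1 :=
                mul_le_mul_of_nonneg_left (hDu1 _) (hρ_nonneg z)
            _ = ρ z := mul_one _
      _ = 1 := hρ_int1
  refine ⟨φ, hφc, fun x => by rw [hgradval]; exact hgv1 x, ?_⟩
  intro x
  -- a.e. translated solution property
  have haez := (Measure.measurePreserving_sub_left (volume : Measure E)
    x).quasiMeasurePreserving.ae hsol
  set e : Fin n → E := fun i => EuclideanSpace.single i (1:ℝ) with hedef
  have he1 : ∀ i, ‖e i‖ ≤ 1 := fun i => by
    rw [hedef]; rw [EuclideanSpace.norm_single, norm_one]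
  set hh : ℕ → ℝ := fun k => 1/((k:ℝ)+1) with hhdef
  have hkpos : ∀ k, 0 < hh k := fun k => by positivity
  have hk_tend : Tendsto hh atTop (nhdsWithin 0 (Set.Ioi 0)) := by
    rw [tendsto_nhdsWithin_iff]
    exact ⟨tendsto_one_div_add_atTop_nhds_zero_nat,
      Eventually.of_forall fun k => hkpos k⟩
  set T : E → ℝ := fun w => ∑ i, ⟪fderiv ℝ Du w (e i), e i⟫_ℝ with hTdef
  set Fk : ℕ → E → ℝ := fun k z => ρ z *
    ∑ i, (ustar ((x - z) + hh k • e i) + ustar ((x - z) - hh k • e i)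
      - 2 * ustar (x - z)) / (hh k)^2 with hFkdef
  set Finf : E → ℝ := fun z => ρ z * T (x - z) with hFinfdef
  have hLco : ((L.toNNReal : ℝ)) = L := Real.coe_toNNReal L hL
  -- pointwise bound
  have hFk_bd : ∀ k z, |Fk k z| ≤ ρ z * ((n : ℝ) * L) := by
    intro k z
    have hsumbd : |∑ i, (ustar ((x - z) + hh k • e i) + ustar ((x - z) - hh k • e i)
        - 2 * ustar (x - z)) / (hh k)^2| ≤ (n : ℝ) * L := by
      calc |∑ i, (ustar ((x - z) + hh k • e i) + ustar ((x - z) - hh k • e i)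
            - 2 * ustar (x - z)) / (hh k)^2|
          ≤ ∑ i, |(ustar ((x - z) + hh k • e i) + ustar ((x - z) - hh k • e i)
            - 2 * ustar (x - z)) / (hh k)^2| := Finset.abs_sum_le_sum_abs _ _
        _ ≤ ∑ _i : Fin n, L := by
            refine Finset.sum_le_sum fun i _ => ?_
            rw [abs_div, abs_of_pos (by positivity : (0:ℝ) < (hh k)^2),
              div_le_iff₀ (by positivity : (0:ℝ) < (hh k)^2)]
            have := grad_secondDiff_bound hgrad hDulip (x - z) (e i) (he1 i) (hkpos k)
            rw [hLco] at this
            exact this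
        _ = (n : ℝ) * L := by
            rw [Finset.sum_const, Finset.card_univ, Fintype.card_fin, nsmul_eq_mul]
    calc |Fk k z| = ρ z * |∑ i, (ustar ((x - z) + hh k • e i)
          + ustar ((x - z) - hh k • e i) - 2 * ustar (x - z)) / (hh k)^2| := by
          rw [hFkdef]
          rw [abs_mul, abs_of_nonneg (hρ_nonneg z)]
      _ ≤ ρ z * ((n : ℝ) * L) := mul_le_mul_of_nonneg_left hsumbd (hρ_nonneg z)
  -- continuity of Fk
  have hFk_cont : ∀ k, Continuous (Fk k) := by
    intro k
    refine hρ_cont.mul (continuous_finset_sum _ fun i _ => Continuous.div_const ?_ _)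
    have c1 : Continuous fun z : E => (x - z) + hh k • e i :=
      (continuous_const.sub continuous_id).add continuous_const
    have c2 : Continuous fun z : E => (x - z) - hh k • e i :=
      (continuous_const.sub continuous_id).sub continuous_const
    have c3 : Continuous fun z : E => x - z := continuous_const.sub continuous_id
    exact ((hu_cont.comp c1).add (hu_cont.comp c2)).sub
      (continuous_const.mul (hu_cont.comp c3))
  -- measurability of the limit
  have hT_meas : Measurable T := by
    rw [hTdef]
    refine Finset.measurable_sum _ fun i _ => ?_
    have hcont : Continuous fun A : (EuclideanSpace ℝ (Fin n)) →L[ℝ] EuclideanSpace ℝ (Fin n)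
        => ⟪A (e i), e i⟫_ℝ :=
      ((ContinuousLinearMap.apply ℝ (EuclideanSpace ℝ (Fin n)) (e i)).continuous).inner
        continuous_const
    exact hcont.measurable.comp (measurable_fderiv ℝ Du)
  have hFinf_meas : AEStronglyMeasurable Finf volume :=
    (hρ_cont.measurable.mul (hT_meas.comp
      (measurable_const.sub measurable_id))).aestronglyMeasurable
  -- a.e. convergence
  have hlimae : ∀ᵐ z : E ∂volume, Tendsto (fun k => Fk k z) atTop (nhds (Finf z)) := by
    filter_upwards [haez] with z hz
    refine Tendsto.const_mul (ρ z) ?_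
    refine tendsto_finset_sum _ fun i _ => ?_
    exact (grad_secondDiff_tendsto hgrad hDuc (e i) hz.1).comp hk_tend
  -- dominated convergence
  have hDCT : Tendsto (fun k => ∫ z, Fk k z) atTop (nhds (∫ z, Finf z)) :=
    tendsto_integral_of_dominated_convergence (fun z => ρ z * ((n:ℝ) * L))
      (fun k => (hFk_cont k).aestronglyMeasurable)
      (hρ_integrable.mul_const _)
      (fun k => ae_of_all _ fun z => by rw [Real.norm_eq_abs]; exact hFk_bd k z)
      hlimae
  -- the difference quotients of φ converge to the Laplacian
  have hQ : Tendsto (fun k => ∑ i, (φ (x + hh k • e i) + φ (x - hh k • e i)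
      - 2 * φ x) / (hh k)^2) atTop (nhds (lap φ x)) := by
    have : lap φ x = ∑ i, fderiv ℝ (fun y => fderiv ℝ φ y (e i)) x (e i) := rfl
    rw [this]
    exact tendsto_finset_sum _ fun i _ =>
      (contDiff_secondDiff_tendsto hφc x (e i)).comp hk_tend
  -- identification of the difference quotients with integrals
  have int1 : ∀ (i : Fin n) (k : ℕ),
      Integrable (fun z => ρ z * ustar ((x - z) + hh k • e i)) volume := by
    intro i k
    have hveq : ∀ z : E, x + hh k • e i - z = (x - z) + hh k • e i := fun z => by abel
    refine (hint_u (x + hh k • e i)).congr (ae_of_all _ fun z => ?_)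
    simp only [hveq]
  have int2 : ∀ (i : Fin n) (k : ℕ),
      Integrable (fun z => ρ z * ustar ((x - z) - hh k • e i)) volume := by
    intro i k
    have hveq : ∀ z : E, x - hh k • e i - z = (x - z) - hh k • e i := fun z => by abel
    refine (hint_u (x - hh k • e i)).congr (ae_of_all _ fun z => ?_)
    simp only [hveq]
  have hQeq : ∀ k, ∑ i, (φ (x + hh k • e i) + φ (x - hh k • e i)
      - 2 * φ x) / (hh k)^2 = ∫ z, Fk k z := by
    intro k
    have hterm : ∀ i : Fin n, (φ (x + hh k • e i) + φ (x - hh k • e i)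
        - 2 * φ x) / (hh k)^2
        = ∫ z, (ρ z * ustar ((x - z) + hh k • e i) + ρ z * ustar ((x - z) - hh k • e i)
            - 2 * (ρ z * ustar (x - z))) / (hh k)^2 := by
      intro i
      have e1 : φ (x + hh k • e i) = ∫ z, ρ z * ustar ((x - z) + hh k • e i) := by
        have hveq : ∀ z : E, x + hh k • e i - z = (x - z) + hh k • e i := fun z => by abel
        simp only [hφdef, hveq]
      have e2 : φ (x - hh k • e i) = ∫ z, ρ z * ustar ((x - z) - hh k • e i) := by
        have hveq : ∀ z : E, x - hh k • e i - z = (x - z) - hh k • e i := fun z => by abel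
        simp only [hφdef, hveq]
      have e3 : φ x = ∫ z, ρ z * ustar (x - z) := rfl
      have key : ∫ z, (ρ z * ustar ((x - z) + hh k • e i) + ρ z * ustar ((x - z) - hh k • e i)
            - 2 * (ρ z * ustar (x - z))) / (hh k)^2
          = ((∫ z, ρ z * ustar ((x - z) + hh k • e i))
            + (∫ z, ρ z * ustar ((x - z) - hh k • e i))
            - 2 * (∫ z, ρ z * ustar (x - z))) / (hh k)^2 := by
        have intAB : Integrable (fun z => ρ z * ustar ((x - z) + hh k • e i)
            + ρ z * ustar ((x - z) - hh k • e i)) volume := (int1 i k).add (int2 i k)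
        have intC : Integrable (fun z => 2 * (ρ z * ustar (x - z))) volume :=
          (hint_u x).const_mul 2
        rw [MeasureTheory.integral_div, MeasureTheory.integral_sub intAB intC,
          MeasureTheory.integral_add (int1 i k) (int2 i k),
          MeasureTheory.integral_const_mul]
      rw [e1, e2, e3, key]
    rw [Finset.sum_congr rfl (fun i _ => hterm i), ← MeasureTheory.integral_finset_sum]
    · refine congrArg _ (funext fun z => ?_)
      simp only [hFkdef, Finset.mul_sum]
      refine Finset.sum_congr rfl fun i _ => ?_
      ring
    · intro i _
      exact (((int1 i k).add (int2 i k)).sub ((hint_u x).const_mul 2)).div_const _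
  have hQ' : Tendsto (fun k => ∫ z, Fk k z) atTop (nhds (lap φ x)) := by
    refine hQ.congr fun k => hQeq k
  have hlapeq : lap φ x = ∫ z, Finf z := tendsto_nhds_unique hQ' hDCT
  -- integrability of the limit
  have hFinf_int : Integrable Finf volume := by
    refine (hρ_integrable.mul_const ((n:ℝ) * L)).mono' hFinf_meas ?_
    filter_upwards [hlimae] with z hz
    rw [Real.norm_eq_abs]
    exact le_of_tendsto hz.abs (Eventually.of_forall fun k => hFk_bd k z)
  -- nonnegativity of the limit integral
  have hge0 : (0:ℝ) ≤ ∫ z, Finf z := by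
    refine integral_nonneg_of_ae ?_
    filter_upwards [haez] with z hz
    have hT0 : 0 ≤ T (x - z) := Finset.sum_nonneg fun i _ => (hz.2.1 (e i)).1
    exact mul_nonneg (hρ_nonneg z) hT0
  -- lower bound of the limit integral
  have hgef : lamStar - (∫ z, ρ z * f (x - z)) ≤ ∫ z, Finf z := by
    have h1 : ∫ z, ρ z * (lamStar - f (x - z)) = lamStar - ∫ z, ρ z * f (x - z) := by
      have hfun : (fun z : E => ρ z * (lamStar - f (x - z)))
          = fun z => ρ z * lamStar - ρ z * f (x - z) := funext fun z => by ring
      rw [hfun, MeasureTheory.integral_sub (hρ_integrable.mul_const _) (hint_f x),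
        MeasureTheory.integral_mul_const, hρ_int1, one_mul]
    have hint2 : Integrable (fun z => ρ z * (lamStar - f (x - z))) volume := by
      refine ((hρ_integrable.mul_const lamStar).sub (hint_f x)).congr
        (ae_of_all _ fun z => ?_)
      simp only [Pi.sub_apply]
      ring
    rw [← h1]
    refine integral_mono_ae hint2 hFinf_int ?_
    filter_upwards [haez] with z hz
    have hmax := hz.2.2
    have hle : lamStar - T (x - z) - f (x - z) ≤ 0 := by
      have h := le_max_left (lamStar - T (x - z) - f (x - z)) (‖Du (x - z)‖ - 1)
      rw [hmax] at h
      exact h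
    exact mul_le_mul_of_nonneg_left (by linarith) (hρ_nonneg z)
  -- conclusion
  by_cases hx : ‖x‖ ≤ R₁ + 1
  · have hsmall : ∫ z, ρ z * f (x - z) ≤ f x + ε := by
      have hpt : ∀ z, ρ z * f (x - z) ≤ ρ z * (f x + ε) := by
        intro z
        rcases (hρ_nonneg z).eq_or_lt with h0 | hpos
        · rw [← h0]; simp
        · have hzsupp : z ∈ Metric.ball (0:E) δ := by
            rw [← hρ_supp]; exact Function.mem_support.2 (ne_of_gt hpos)
          have hzn : ‖z‖ < δ := by rwa [Metric.mem_ball, dist_zero_right] at hzsupp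
          have hx1 : x ∈ Metric.closedBall (0:E) (R₁+2) := by
            rw [Metric.mem_closedBall, dist_zero_right]; linarith
          have hx2 : x - z ∈ Metric.closedBall (0:E) (R₁+2) := by
            rw [Metric.mem_closedBall, dist_zero_right]
            calc ‖x - z‖ ≤ ‖x‖ + ‖z‖ := norm_sub_le _ _
              _ ≤ R₁ + 2 := by linarith
          have hdist : dist (x - z) x < δ₀ := by
            rw [dist_eq_norm, show x - z - x = -z from by abel, norm_neg]
            linarith
          have hd := hδprop _ hx2 _ hx1 hdist
          rw [Real.dist_eq] at hd
          have hfle : f (x - z) ≤ f x + ε := by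
            have := (abs_lt.1 hd).2
            linarith
          exact mul_le_mul_of_nonneg_left hfle hpos.le
      calc ∫ z, ρ z * f (x - z) ≤ ∫ z, ρ z * (f x + ε) :=
          integral_mono (hint_f x) (hρ_integrable.mul_const _) hpt
        _ = f x + ε := by rw [MeasureTheory.integral_mul_const, hρ_int1, one_mul]
    rw [hlapeq]
    linarith
  · push_neg at hx
    have hfx : lamStar ≤ f x := hR₁ x (by linarith)
    rw [hlapeq]
    linarith

end Mollify

theorem stmt17 {n : ℕ} (f : EuclideanSpace ℝ (Fin n) → ℝ) (L lamStar : ℝ)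
    (hL : 0 ≤ L)
    (hfconv : ConvexOn ℝ Set.univ f)
    (hfsuper : Tendsto (fun x : EuclideanSpace ℝ (Fin n) => f x / ‖x‖)
      (cocompact (EuclideanSpace ℝ (Fin n))) atTop)
    -- λ* is the supremum of eigenvalues admitting a viscosity subsolution with sublinear growth
    (hlamStar : IsLUB {lam : ℝ | ∃ u : EuclideanSpace ℝ (Fin n) → ℝ,
        UpperSemicontinuous u ∧
        (∀ x₀ p X, InSuperjet u x₀ p X → max (lam - X.trace - f x₀) (‖p‖ - 1) ≤ 0) ∧
        limsup (fun x => u x / ‖x‖) (cocompact (EuclideanSpace ℝ (Fin n))) ≤ 1} lamStar)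
    -- λ* admits a convex C^{1,1} solution u* with |Du*| ≤ 1 and 0 ≤ D²u* ≤ L
    (ustar : EuclideanSpace ℝ (Fin n) → ℝ)
    (Du : EuclideanSpace ℝ (Fin n) → EuclideanSpace ℝ (Fin n))
    (hconv : ConvexOn ℝ Set.univ ustar)
    (hgrad : ∀ x, HasGradientAt ustar (Du x) x)
    (hDulip : LipschitzWith L.toNNReal Du)
    (hDu1 : ∀ x, ‖Du x‖ ≤ 1)
    (hsol : ∀ᵐ x : EuclideanSpace ℝ (Fin n) ∂volume, DifferentiableAt ℝ Du x ∧
      (∀ ξ : EuclideanSpace ℝ (Fin n),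
        0 ≤ ⟪fderiv ℝ Du x ξ, ξ⟫_ℝ ∧ ⟪fderiv ℝ Du x ξ, ξ⟫_ℝ ≤ L * ‖ξ‖ ^ 2) ∧
      max (lamStar - (∑ i, ⟪fderiv ℝ Du x (EuclideanSpace.single i (1:ℝ)),
        EuclideanSpace.single i (1:ℝ)⟫_ℝ) - f x) (‖Du x‖ - 1) = 0) :
    IsLUB {mu : ℝ | ∃ φ : EuclideanSpace ℝ (Fin n) → ℝ, ContDiff ℝ 2 φ ∧
      (∀ x, ‖gradient φ x‖ ≤ 1) ∧ ∀ x, mu ≤ lap φ x + f x} lamStar := by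
  constructor
  · -- lamStar is an upper bound of the classical set
    rintro mu ⟨φ, hφ, hg1, hsub⟩
    refine hlamStar.1 ?_
    refine ⟨φ, (hφ.continuous).upperSemicontinuous, ?_, ?_⟩
    · intro x₀ p X hsj
      obtain ⟨hp, htr⟩ := superjet_facts hφ hsj
      refine max_le ?_ ?_
      · have h1 := hsub x₀
        linarith
      · rw [hp]
        linarith [hg1 x₀]
    · have hdφ : Differentiable ℝ φ := hφ.differentiable (by norm_num)
      have hfd : ∀ x, ‖fderiv ℝ φ x‖₊ ≤ 1 := by
        intro x
        have h1 : fderiv ℝ φ x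
            = (InnerProductSpace.toDual ℝ _) (gradient φ x) :=
          ((hdφ x).hasGradientAt).hasFDerivAt.fderiv
        have h2 : ‖fderiv ℝ φ x‖ ≤ 1 := by
          rw [h1, LinearIsometryEquiv.norm_map]
          exact hg1 x
        rwa [← NNReal.coe_le_coe, coe_nnnorm, NNReal.coe_one]
      exact limsup_lipschitz_le (lipschitzWith_of_nnnorm_fderiv_le hdφ hfd)
  · -- lamStar is the least upper bound
    intro b hb
    have key : ∀ ε : ℝ, 0 < ε → lamStar - ε ≤ b := by
      intro ε hε
      obtain ⟨φ, hφ, hg1, hsub⟩ := mollified_subsolution f L lamStar hL hfconv hfsuper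
        ustar Du hgrad hDulip hDu1 hsol hε
      exact hb ⟨φ, hφ, hg1, hsub⟩
    by_contra hcon
    push_neg at hcon
    have := key ((lamStar - b)/2) (by linarith)
    linarith
end

section
/- Let f : ℝⁿ → ℝ be convex, superlinear, and nonnegative, and suppose ψ* ∈ C²(ℝⁿ) is a classical supersolution of max{λ* − Δψ* − f, |Dψ*| − 1} = 0 with liminf_{|x|→∞} ψ*(x)/|x| ≥ 1. Define λ_+ = inf over ψ ∈ C²(ℝⁿ) with liminf ψ(x)/|x| ≥ 1 of sup_{x : |Dψ(x)| < 1}(Δψ(x) + f(x)). Then λ_+ ≤ λ*, where λ* satisfies λ* ≤ τ^ψ for all admissible ψ (τ^ψ being the sup in the definition). Consequently λ* = λ_+. -/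
open Filter
open scoped Topology

theorem stmt18 {n : ℕ} (f : EuclideanSpace ℝ (Fin n) → ℝ) (lamStar : ℝ)
    (hfconv : ConvexOn ℝ Set.univ f) (hfnn : ∀ x, 0 ≤ f x)
    (hfsuper : Tendsto (fun x : EuclideanSpace ℝ (Fin n) => f x / ‖x‖)
      (cocompact (EuclideanSpace ℝ (Fin n))) atTop)
    (ψstar : EuclideanSpace ℝ (Fin n) → ℝ) (hψ : ContDiff ℝ 2 ψstar)
    (hψsup : ∀ x, 0 ≤ max (lamStar - lap ψstar x - f x) (‖gradient ψstar x‖ - 1))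
    (hψgrow : 1 ≤ liminf (fun x => ψstar x / ‖x‖)
      (cocompact (EuclideanSpace ℝ (Fin n))))
    (T : Set ℝ)
    (hT : T = {τ : ℝ | ∃ ψ : EuclideanSpace ℝ (Fin n) → ℝ, ContDiff ℝ 2 ψ ∧
        1 ≤ liminf (fun x => ψ x / ‖x‖) (cocompact (EuclideanSpace ℝ (Fin n))) ∧
        ∀ x, ‖gradient ψ x‖ < 1 → lap ψ x + f x ≤ τ})
    (hstar : ∀ τ ∈ T, lamStar ≤ τ)
    (lamPlus : ℝ) (hPlus : IsGLB T lamPlus) :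
    lamPlus ≤ lamStar ∧ lamStar = lamPlus := by
  have hmem : lamStar ∈ T := by
    rw [hT]
    refine ⟨ψstar, hψ, hψgrow, fun x hx => ?_⟩
    have h := hψsup x
    have h2 : ‖gradient ψstar x‖ - 1 < 0 := by linarith
    have h3 : 0 ≤ lamStar - lap ψstar x - f x := by
      rcases le_max_iff.mp h with h | h
      · exact h
      · linarith
    linarith
  have h1 : lamPlus ≤ lamStar := hPlus.1 hmem
  have h2 : lamStar ≤ lamPlus := hPlus.2 hstar
  exact ⟨h1, le_antisymm h2 h1⟩
end
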